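/- arXiv:2006.03216 — 8 statements merged into one kernel-verified Lean document; each statement's English description precedes it below -/
import Mathlib

section
/- Let a, b ≥ 0 with a ≥ b, and suppose b ≤ k₁ a + k₂ where k₁ ∈ [0,1) and k₂ ≥ 0. Then (a+b)² ≤ 2((1+k₁)/(1−k₁))(a² − b²) + 4k₂²/(1−k₁)². -/
/-- Sufficiency direction: if b ≤ k₁ a + k₂ with 0 ≤ b ≤ a, k₁ ∈ [0,1), k₂ ≥ 0, then
    (a+b)² ≤ 2((1+k₁)/(1−k₁))(a²−b²) + 4k₂²/(1−k₁)². -/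
theorem elliptic_sufficiency (a b k₁ k₂ : ℝ) (hb : 0 ≤ b) (hba : b ≤ a)
    (hk₁ : 0 ≤ k₁) (hk₁' : k₁ < 1) (hk₂ : 0 ≤ k₂)
    (h : b ≤ k₁ * a + k₂) :
    (a + b) ^ 2 ≤ 2 * ((1 + k₁) / (1 - k₁)) * (a ^ 2 - b ^ 2)
      + 4 * k₂ ^ 2 / (1 - k₁) ^ 2 := by
  have hu : 0 < 1 - k₁ := by linarith
  have key : (1 - k₁)^2 * (a + b) ^ 2 ≤ 2 * (1 + k₁) * (1 - k₁) * (a ^ 2 - b ^ 2) + 4 * k₂ ^ 2 := by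
    nlinarith [mul_nonneg (mul_nonneg hu.le (by linarith : (0:ℝ) ≤ a + b))
        (by linarith : 0 ≤ k₁ * a + k₂ - b),
      sq_nonneg ((1-k₁)*a - k₂), sq_nonneg ((1-k₁)*(a+b) - 2*k₂),
      mul_nonneg hb (by linarith : 0 ≤ a - b), sq_nonneg (a-b),
      mul_nonneg hk₁ hb, mul_nonneg hk₂ hb,
      mul_nonneg (mul_nonneg hk₁ hk₁) (sq_nonneg (a-b))]
  have h2 : 2 * ((1 + k₁) / (1 - k₁)) * (a ^ 2 - b ^ 2) + 4 * k₂ ^ 2 / (1 - k₁) ^ 2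
      = (2 * (1 + k₁) * (1 - k₁) * (a ^ 2 - b ^ 2) + 4 * k₂ ^ 2) / (1 - k₁)^2 := by
    field_simp
  rw [h2, le_div_iff₀ (by positivity)]
  nlinarith [key]
end

section
/- The function f(z) = 3z|z|² − z|z|⁸ is injective on the open unit disk 𝔻 in ℂ. -/
lemma aux_lt (a b : ℝ) (ha0 : 0 ≤ a) (ha1 : a < 1) (hb0 : 0 ≤ b) (hb1 : b < 1)
    (hlt : a < b) : (3 * a ^ 2 - a ^ 8) * a < (3 * b ^ 2 - b ^ 8) * b := by
  have h3 : a ^ 3 < b ^ 3 := pow_lt_pow_left₀ hlt ha0 (by norm_num)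
  have ha6 : a ^ 6 < 1 := pow_lt_one₀ ha0 ha1 (by norm_num)
  have hb6 : b ^ 6 < 1 := pow_lt_one₀ hb0 hb1 (by norm_num)
  have hab : a ^ 3 * b ^ 3 ≤ b ^ 3 :=
    mul_le_of_le_one_left (pow_nonneg hb0 3) (pow_le_one₀ ha0 ha1.le)
  have hb3 : b ^ 3 < 1 := pow_lt_one₀ hb0 hb1 (by norm_num)
  have key : 0 < (b ^ 3 - a ^ 3) * (3 - (a ^ 6 + a ^ 3 * b ^ 3 + b ^ 6)) :=
    mul_pos (by linarith) (by linarith)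
  nlinarith [key]

lemma aux_mono (a b : ℝ) (ha0 : 0 ≤ a) (ha1 : a < 1) (hb0 : 0 ≤ b) (hb1 : b < 1)
    (h : (3 * a ^ 2 - a ^ 8) * a = (3 * b ^ 2 - b ^ 8) * b) : a = b := by
  rcases lt_trichotomy a b with hlt | heq | hgt
  · exact absurd h (ne_of_lt (aux_lt a b ha0 ha1 hb0 hb1 hlt))
  · exact heq
  · exact absurd h.symm (ne_of_lt (aux_lt b a hb0 hb1 ha0 ha1 hgt))

/-- The mapping f(z) = 3z|z|² − z|z|⁸ is injective on the open unit disk. -/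
theorem example_map_injective :
    Set.InjOn (fun z : ℂ => 3 * z * (‖z‖ : ℂ) ^ 2 - z * (‖z‖ : ℂ) ^ 8)
      {z : ℂ | ‖z‖ < 1} := by
  intro z₁ h₁ z₂ h₂ h
  simp only [Set.mem_setOf_eq] at h₁ h₂
  have key : ∀ z : ℂ, 3 * z * (‖z‖ : ℂ) ^ 2 - z * (‖z‖ : ℂ) ^ 8
      = ((3 * (‖z‖) ^ 2 - (‖z‖) ^ 8 : ℝ) : ℂ) * z := by
    intro z; push_cast; ring
  simp only [key] at h
  set r₁ := ‖z₁‖ with hr₁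
  set r₂ := ‖z₂‖ with hr₂
  have hr₁0 : 0 ≤ r₁ := norm_nonneg _
  have hr₂0 : 0 ≤ r₂ := norm_nonneg _
  have hr₁6 : r₁ ^ 6 ≤ 1 := pow_le_one₀ hr₁0 h₁.le
  have hr₂6 : r₂ ^ 6 ≤ 1 := pow_le_one₀ hr₂0 h₂.le
  have hc₁ : 0 ≤ 3 * r₁ ^ 2 - r₁ ^ 8 := by nlinarith [sq_nonneg r₁]
  have hc₂ : 0 ≤ 3 * r₂ ^ 2 - r₂ ^ 8 := by nlinarith [sq_nonneg r₂]
  have habs : (3 * r₁ ^ 2 - r₁ ^ 8) * r₁ = (3 * r₂ ^ 2 - r₂ ^ 8) * r₂ := by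
    have h' := congrArg norm h
    rw [norm_mul, norm_mul, Complex.norm_real, Complex.norm_real, Real.norm_eq_abs, Real.norm_eq_abs, ← hr₁, ← hr₂,
      abs_of_nonneg hc₁, abs_of_nonneg hc₂] at h'
    exact h'
  have hreq : r₁ = r₂ := aux_mono r₁ r₂ hr₁0 h₁ hr₂0 h₂ habs
  rcases eq_or_lt_of_le hr₁0 with hz | hz
  · have hz₁ : z₁ = 0 := by rwa [eq_comm, hr₁, norm_eq_zero] at hz
    have hz₂ : z₂ = 0 := by
      have : r₂ = 0 := by rw [← hreq, ← hz]
      rwa [hr₂, norm_eq_zero] at this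
    rw [hz₁, hz₂]
  · have hcpos : 0 < 3 * r₁ ^ 2 - r₁ ^ 8 := by nlinarith [sq_nonneg r₁]
    rw [← hreq] at h
    have hne : ((3 * r₁ ^ 2 - r₁ ^ 8 : ℝ) : ℂ) ≠ 0 := by exact_mod_cast hcpos.ne'
    exact mul_left_cancel₀ hne h
end

section
/- For f(z) = 3z|z|² − z|z|⁸ with f_z(z) = |z|²(6 − 5|z|⁶) and f_{z̄}(z) = z²(3 − 4|z|⁶), the limit of |f_{z̄}(z)|/|f_z(z)| as |z| → 1⁻ equals 1. Consequently f is not a K-quasiconformal mapping for any fixed K ≥ 1. -/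
open Complex Metric Set

/-- Wirtinger derivative f_z = (f_x − i f_y)/2. -/
noncomputable def wdz (f : ℂ → ℂ) (z : ℂ) : ℂ :=
  (fderiv ℝ f z 1 - Complex.I * fderiv ℝ f z Complex.I) / 2

/-- Wirtinger derivative f_{z̄} = (f_x + i f_y)/2. -/
noncomputable def wdzbar (f : ℂ → ℂ) (z : ℂ) : ℂ :=
  (fderiv ℝ f z 1 + Complex.I * fderiv ℝ f z Complex.I) / 2

private lemma QC.feq : (fun w : ℂ => 3 * w * (norm w : ℂ) ^ 2 - w * (norm w : ℂ) ^ 8)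
    = fun w : ℂ => 3 * (w * (w * (starRingEnd ℂ) w)) -
        w * ((w * (starRingEnd ℂ) w) * (w * (starRingEnd ℂ) w) *
          ((w * (starRingEnd ℂ) w) * (w * (starRingEnd ℂ) w))) := by
  funext w
  have h : ((norm w : ℂ)) ^ 2 = w * (starRingEnd ℂ) w := by
    rw [Complex.mul_conj]; norm_cast; exact Complex.sq_norm w
  have h8 : ((norm w : ℂ)) ^ 8 = ((norm w : ℂ) ^ 2) ^ 4 := by ring
  rw [h8, h]; ring

private lemma QC.hD (z : ℂ) : ∃ D : ℂ →L[ℝ] ℂ,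
    HasFDerivAt (fun w : ℂ => 3 * (w * (w * (starRingEnd ℂ) w)) -
        w * ((w * (starRingEnd ℂ) w) * (w * (starRingEnd ℂ) w) *
          ((w * (starRingEnd ℂ) w) * (w * (starRingEnd ℂ) w)))) D z ∧
    (D 1 - Complex.I * D Complex.I) / 2
      = ((Complex.normSq z * (6 - 5 * Complex.normSq z ^ 3) : ℝ) : ℂ) ∧
    (D 1 + Complex.I * D Complex.I) / 2
      = z ^ 2 * ((3 - 4 * Complex.normSq z ^ 3 : ℝ) : ℂ) := by
  have hid : HasFDerivAt (fun w : ℂ => w) (ContinuousLinearMap.id ℝ ℂ) z := hasFDerivAt_id z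
  have hconj : HasFDerivAt (fun w : ℂ => (starRingEnd ℂ) w)
      (Complex.conjCLE.toContinuousLinearMap) z := Complex.conjCLE.hasFDerivAt
  have hg := hid.mul hconj
  have hgg := hg.mul hg
  have hg4 := hgg.mul hgg
  have h1 := (hid.mul hg).const_mul (3:ℂ)
  have h2 := hid.mul hg4
  refine ⟨_, h1.sub h2, ?_, ?_⟩
  · have hns : ((Complex.normSq z : ℂ)) = z * (starRingEnd ℂ) z := (Complex.mul_conj z).symm
    push_cast
    rw [hns]
    simp [ContinuousLinearMap.add_apply, ContinuousLinearMap.smul_apply, Complex.conjCLE_apply]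
    ring_nf
    rw [Complex.I_sq]
    ring
  · have hns : ((Complex.normSq z : ℂ)) = z * (starRingEnd ℂ) z := (Complex.mul_conj z).symm
    push_cast
    rw [hns]
    simp [ContinuousLinearMap.add_apply, ContinuousLinearMap.smul_apply, Complex.conjCLE_apply]
    ring_nf
    rw [Complex.I_sq]
    ring

private lemma QC.wdz_eq (z : ℂ) :
    wdz (fun w : ℂ => 3 * w * (norm w : ℂ) ^ 2 - w * (norm w : ℂ) ^ 8) z
    = ((Complex.normSq z * (6 - 5 * Complex.normSq z ^ 3) : ℝ) : ℂ) := by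
  obtain ⟨D, hD, h1, _⟩ := QC.hD z
  rw [wdz, QC.feq, hD.fderiv]; exact h1

private lemma QC.wdzbar_eq (z : ℂ) :
    wdzbar (fun w : ℂ => 3 * w * (norm w : ℂ) ^ 2 - w * (norm w : ℂ) ^ 8) z
    = z ^ 2 * ((3 - 4 * Complex.normSq z ^ 3 : ℝ) : ℂ) := by
  obtain ⟨D, hD, _, h2⟩ := QC.hD z
  rw [wdzbar, QC.feq, hD.fderiv]; exact h2

/-- For f(z) = 3z|z|² − z|z|⁸, |f_{z̄}(z)|/|f_z(z)| → 1 as |z| → 1⁻; consequently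
    f is not K-quasiconformal for any K ≥ 1. -/
theorem example_map_not_quasiconformal :
    Filter.Tendsto
      (fun z : ℂ =>
        norm (wdzbar (fun w : ℂ => 3 * w * (norm w : ℂ) ^ 2 - w * (norm w : ℂ) ^ 8) z)
          / norm (wdz (fun w : ℂ => 3 * w * (norm w : ℂ) ^ 2 - w * (norm w : ℂ) ^ 8) z))
      (Filter.comap (fun z : ℂ => norm z) (nhdsWithin 1 (Set.Iio 1)))
      (nhds 1) ∧
    ¬ ∃ K : ℝ, 1 ≤ K ∧ ∀ z ∈ Metric.ball (0:ℂ) 1,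
      norm (wdz (fun w : ℂ => 3 * w * (norm w : ℂ) ^ 2 - w * (norm w : ℂ) ^ 8) z)
        + norm (wdzbar (fun w : ℂ => 3 * w * (norm w : ℂ) ^ 2 - w * (norm w : ℂ) ^ 8) z)
      ≤ K * (norm (wdz (fun w : ℂ => 3 * w * (norm w : ℂ) ^ 2 - w * (norm w : ℂ) ^ 8) z)
        - norm (wdzbar (fun w : ℂ => 3 * w * (norm w : ℂ) ^ 2 - w * (norm w : ℂ) ^ 8) z)) := by
  have habs_wdz : ∀ z : ℂ, norm
      (wdz (fun w : ℂ => 3 * w * (norm w : ℂ) ^ 2 - w * (norm w : ℂ) ^ 8) z)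
      = |Complex.normSq z * (6 - 5 * Complex.normSq z ^ 3)| := by
    intro z; rw [QC.wdz_eq, Complex.norm_real, Real.norm_eq_abs]
  have habs_wdzbar : ∀ z : ℂ, norm
      (wdzbar (fun w : ℂ => 3 * w * (norm w : ℂ) ^ 2 - w * (norm w : ℂ) ^ 8) z)
      = Complex.normSq z * |3 - 4 * Complex.normSq z ^ 3| := by
    intro z
    rw [QC.wdzbar_eq, norm_mul, Complex.norm_real, Real.norm_eq_abs, norm_pow, Complex.sq_norm]
  constructor
  · -- tendsto part
    set φ : ℝ → ℝ := fun r => |3 - 4 * (r ^ 2) ^ 3| / (6 - 5 * (r ^ 2) ^ 3) with hφ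
    have hφcont : Filter.Tendsto φ (nhdsWithin 1 (Set.Iio 1)) (nhds 1) := by
      have : ContinuousAt φ 1 := by
        apply ContinuousAt.div
        · fun_prop
        · fun_prop
        · norm_num
      have h1 : φ 1 = 1 := by norm_num [hφ]
      simpa [h1] using (this.continuousWithinAt : ContinuousWithinAt φ (Set.Iio 1) 1).tendsto
    have hcomp : Filter.Tendsto (fun z : ℂ => φ (norm z))
        (Filter.comap (fun z : ℂ => norm z) (nhdsWithin 1 (Set.Iio 1))) (nhds 1) :=
      hφcont.comp Filter.tendsto_comap
    apply hcomp.congr'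
    have hmem : (fun z : ℂ => norm z) ⁻¹' (Set.Ioo (1/2 : ℝ) 1) ∈
        Filter.comap (fun z : ℂ => norm z) (nhdsWithin 1 (Set.Iio 1)) := by
      apply Filter.preimage_mem_comap
      apply Ioo_mem_nhdsLT_of_mem
      constructor <;> norm_num
    filter_upwards [hmem] with z hz
    obtain ⟨hz1, hz2⟩ := hz
    have hns : Complex.normSq z = norm z ^ 2 := (Complex.sq_norm z).symm
    have hnspos : 0 < Complex.normSq z := by
      rw [hns]; positivity
    have hnslt : Complex.normSq z < 1 := by
      rw [hns]; nlinarith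
    have hcube : Complex.normSq z ^ 3 ≤ 1 :=
      pow_le_one₀ (le_of_lt hnspos) (le_of_lt hnslt)
    have hden : 0 < 6 - 5 * Complex.normSq z ^ 3 := by nlinarith
    rw [habs_wdz z, habs_wdzbar z, abs_of_pos (by nlinarith : (0:ℝ) < Complex.normSq z * (6 - 5 * Complex.normSq z ^ 3))]
    rw [hφ]
    simp only
    rw [← hns, mul_div_mul_left _ _ (ne_of_gt hnspos)]
  · -- not quasiconformal
    rintro ⟨K, hK, h⟩
    set s : ℝ := (9 * K - 2) / (9 * K - 1) with hs
    have hK9 : (8:ℝ) ≤ 9 * K - 1 := by linarith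
    have hK9pos : (0:ℝ) < 9 * K - 1 := by linarith
    have hs_lt : s < 1 := by
      rw [hs, div_lt_one hK9pos]; linarith
    have hs_ge : (7/8 : ℝ) ≤ s := by
      rw [hs, le_div_iff₀ hK9pos]; nlinarith
    have hs_pos : (0:ℝ) < s := by linarith
    set r : ℝ := s ^ ((1:ℝ)/6) with hr
    have hr_pos : 0 < r := Real.rpow_pos_of_pos hs_pos _
    have hr_lt : r < 1 := Real.rpow_lt_one (le_of_lt hs_pos) hs_lt (by norm_num)
    have hr6 : r ^ 6 = s := by
      rw [hr, ← Real.rpow_natCast (s ^ ((1:ℝ)/6)) 6, ← Real.rpow_mul (le_of_lt hs_pos)]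
      norm_num
    have hzball : (r : ℂ) ∈ Metric.ball (0:ℂ) 1 := by
      simp [Complex.norm_real, abs_of_pos hr_pos, hr_lt]
    have hns : Complex.normSq (r : ℂ) = r ^ 2 := by
      rw [← Complex.sq_norm, Complex.norm_real, Real.norm_eq_abs, abs_of_pos hr_pos]
    have := h (r : ℂ) hzball
    rw [habs_wdz, habs_wdzbar, hns] at this
    have h63 : (r ^ 2) ^ 3 = s := by rw [← hr6]; ring
    rw [h63] at this
    have hr2 : (0:ℝ) < r ^ 2 := by positivity
    rw [abs_of_pos (by nlinarith : (0:ℝ) < r ^ 2 * (6 - 5 * s))] at this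
    have habs : |3 - 4 * s| = 4 * s - 3 := by
      rw [abs_of_nonpos (by nlinarith)]; ring
    rw [habs] at this
    have hseq : s * (9 * K - 1) = 9 * K - 2 := by
      rw [hs]; field_simp
    have key : 3 - s ≤ K * (9 - 9 * s) := by nlinarith [this, hr2]
    nlinarith [key, hseq, hK, hK9pos]
end

section
/- Let f be a harmonic (K,K')-quasiconformal mapping of the unit disk, written f(z) = Σ_{n≥0} a_n zⁿ + Σ_{n≥1} b̄_n z̄ⁿ, and suppose the perimeter ℓ_f(1) = sup_{0<r<1} ∫₀^{2π} |∂_θ f(re^{iθ})| dθ is at most 2πR. Then for every n ≥ 1, |a_n| + |b_n| ≤ (√K' + KR)/n. -/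
open Complex Metric Set

open Filter Topology MeasureTheory

lemma fderiv_apply_wdz (f : ℂ → ℂ) (z v : ℂ) :
    fderiv ℝ f z v = wdz f z * v + wdzbar f z * (starRingEnd ℂ) v := by
  obtain ⟨x, y, rfl⟩ : ∃ x y : ℝ, v = (x:ℂ) + y*Complex.I :=
    ⟨v.re, v.im, (Complex.re_add_im v).symm⟩
  set L := fderiv ℝ f z with hLdef
  have hL : L ((x:ℂ) + y*Complex.I) = (x:ℂ) * L 1 + (y:ℂ) * L Complex.I := by
    have h : ((x:ℂ) + y*Complex.I) = x • (1:ℂ) + y • Complex.I := by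
      simp [Complex.real_smul]
    rw [h, L.map_add, L.map_smul, L.map_smul]
    simp [Complex.real_smul]
  have hcv : (starRingEnd ℂ) ((x:ℂ) + y*Complex.I) = (x:ℂ) - y*Complex.I := by
    simp [Complex.ext_iff]
  rw [hL, hcv, wdz, wdzbar, ← hLdef]
  linear_combination (y:ℂ) * (L Complex.I) * Complex.I_sq

lemma circleInt (k : ℤ) :
    (∫ θ in (0:ℝ)..(2*Real.pi), Complex.exp ((k:ℂ) * θ * Complex.I))
      = if k = 0 then (2*Real.pi : ℂ) else 0 := by
  rcases eq_or_ne k 0 with hk | hk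
  · simp [hk]
  · have hc : ((k:ℂ) * Complex.I) ≠ 0 :=
      mul_ne_zero (Int.cast_ne_zero.mpr hk) Complex.I_ne_zero
    have harg : ∀ θ : ℝ, (k:ℂ) * θ * Complex.I = ((k:ℂ)*Complex.I) * θ := by intro θ; ring
    simp_rw [harg]
    rw [integral_exp_mul_complex hc, if_neg hk]
    have h1 : (k:ℂ)*Complex.I*((2*Real.pi : ℝ):ℂ) = (k:ℂ) * (2*(Real.pi:ℂ)*Complex.I) := by
      push_cast; ring
    rw [h1, Complex.exp_int_mul_two_pi_mul_I k]
    simp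

lemma qc_pointwise {p q t K K' : ℝ} (hK : 1 ≤ K) (hK' : 0 ≤ K')
    (hp : 0 ≤ p) (hq : 0 ≤ q) (hpq : (p+q)^2 ≤ K*(p^2-q^2) + K')
    (ht : p - q ≤ t) (ht0 : 0 ≤ t) : p + q ≤ K*t + Real.sqrt K' := by
  have hc0 : 0 ≤ Real.sqrt K' := Real.sqrt_nonneg _
  have hcsq : Real.sqrt K' ^ 2 = K' := Real.sq_sqrt hK'
  have hK0 : (0:ℝ) < K := lt_of_lt_of_le one_pos hK
  by_contra hcon
  push_neg at hcon
  have hs0 : 0 ≤ p + q := add_nonneg hp hq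
  have hKd : K*(p-q) ≤ K*t := by nlinarith
  have hKdc : K*(p-q) + Real.sqrt K' < p + q := by linarith
  rcases le_or_gt (p - q) 0 with hd | hd
  · have h1 : (p+q)^2 ≤ Real.sqrt K' ^2 := by
      nlinarith [mul_nonneg (le_of_lt hK0) (mul_nonneg hs0 (neg_nonneg.mpr hd))]
    have h2 : p + q ≤ Real.sqrt K' := by nlinarith
    nlinarith
  · have hspos : 0 < p + q := by nlinarith
    have h1 : (p+q) * ((p+q) - K*(p-q) - Real.sqrt K') > 0 :=
      mul_pos hspos (by linarith)
    nlinarith [mul_nonneg hc0 (show 0 ≤ p + q - Real.sqrt K' by nlinarith)]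


noncomputable def cw (q θ : ℝ) : ℂ := Complex.exp ((q:ℂ) * θ * Complex.I)

lemma cw_mul (q q' θ : ℝ) : cw q θ * cw q' θ = cw (q + q') θ := by
  rw [cw, cw, cw, ← Complex.exp_add]; congr 1; push_cast; ring

lemma cw_zero (θ : ℝ) : cw 0 θ = 1 := by simp [cw]

lemma cw_abs (q θ : ℝ) : ‖cw q θ‖ = 1 := by
  rw [cw]
  have : (q:ℂ) * θ * Complex.I = ((q*θ : ℝ):ℂ) * Complex.I := by push_cast; ring
  rw [this, Complex.norm_exp_ofReal_mul_I]

lemma cw_norm (q θ : ℝ) : ‖cw q θ‖ = 1 := cw_abs q θ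

lemma cw_cont (q : ℝ) : Continuous (fun θ => cw q θ) := by
  unfold cw; fun_prop

lemma cw_intble (q : ℝ) (c d : ℝ) : IntervalIntegrable (fun θ => cw q θ) MeasureTheory.volume c d :=
  (cw_cont q).intervalIntegrable c d

lemma zpow_eq (ρ θ : ℝ) (m : ℕ) :
    ((ρ:ℂ) * Complex.exp ((θ:ℂ)*Complex.I))^m = (ρ:ℂ)^m * cw m θ := by
  rw [mul_pow, ← Complex.exp_nat_mul, cw]
  push_cast
  ring_nf

lemma zbarpow_eq (ρ θ : ℝ) (m : ℕ) :
    ((starRingEnd ℂ) ((ρ:ℂ) * Complex.exp ((θ:ℂ)*Complex.I)))^m = (ρ:ℂ)^m * cw (-(m:ℝ)) θ := by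
  have h : (starRingEnd ℂ) ((ρ:ℂ) * Complex.exp ((θ:ℂ)*Complex.I))
      = (ρ:ℂ) * Complex.exp (-(θ:ℂ)*Complex.I) := by
    rw [map_mul, Complex.conj_ofReal, ← Complex.exp_conj, map_mul, Complex.conj_ofReal,
      Complex.conj_I]
    ring_nf
  rw [h, mul_pow, ← Complex.exp_nat_mul, cw]
  rw [show ((m:ℂ) * (-(θ:ℂ)*Complex.I)) = ((-(m:ℝ) : ℝ):ℂ) * θ * Complex.I by push_cast; ring]

lemma mem_ball_circle {s : ℝ} (hs0 : 0 ≤ s) (hs1 : s < 1) (θ : ℝ) :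
    (s:ℂ) * Complex.exp ((θ:ℂ)*Complex.I) ∈ Metric.ball (0:ℂ) 1 := by
  rw [Metric.mem_ball, Complex.dist_eq, sub_zero, norm_mul, Complex.norm_real, Real.norm_eq_abs,
    Complex.norm_exp_ofReal_mul_I, mul_one, _root_.abs_of_nonneg hs0]
  exact hs1

lemma norm_integral_cw_le {q : ℝ} (hq : q ≠ 0) (c d : ℝ) :
    ‖∫ θ in c..d, cw q θ‖ ≤ 2 / |q| := by
  have hc : ((q:ℂ) * Complex.I) ≠ 0 :=
    mul_ne_zero (by exact_mod_cast hq) Complex.I_ne_zero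
  have harg : ∀ θ : ℝ, cw q θ = Complex.exp (((q:ℂ)*Complex.I) * θ) := by
    intro θ; rw [cw]; ring_nf
  simp_rw [harg]
  rw [integral_exp_mul_complex hc, norm_div]
  have h1 : ‖Complex.exp ((q:ℂ)*Complex.I*(d:ℂ)) - Complex.exp ((q:ℂ)*Complex.I*(c:ℂ))‖ ≤ 2 := by
    have e1 : ‖Complex.exp ((q:ℂ)*Complex.I*(d:ℂ))‖ = 1 := by
      rw [show (q:ℂ)*Complex.I*(d:ℂ) = (q:ℂ)*d*Complex.I by ring]; exact cw_norm q d
    have e2 : ‖Complex.exp ((q:ℂ)*Complex.I*(c:ℂ))‖ = 1 := by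
      rw [show (q:ℂ)*Complex.I*(c:ℂ) = (q:ℂ)*c*Complex.I by ring]; exact cw_norm q c
    calc ‖Complex.exp ((q:ℂ)*Complex.I*(d:ℂ)) - Complex.exp ((q:ℂ)*Complex.I*(c:ℂ))‖
        ≤ ‖Complex.exp ((q:ℂ)*Complex.I*(d:ℂ))‖ + ‖Complex.exp ((q:ℂ)*Complex.I*(c:ℂ))‖ :=
          norm_sub_le _ _
      _ ≤ 2 := by rw [e1, e2]; norm_num
  have h2 : ‖(q:ℂ)*Complex.I‖ = |q| := by
    rw [norm_mul, Complex.norm_real, Real.norm_eq_abs, Complex.norm_I,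
      mul_one]
  rw [h2]
  gcongr

lemma circleInt_cw (k : ℤ) :
    (∫ θ in (0:ℝ)..(2*Real.pi), cw k θ) = if k = 0 then (2*Real.pi : ℂ) else 0 := by
  rcases eq_or_ne k 0 with hk | hk
  · simp [hk, cw_zero]
  · have hc : (((k:ℝ):ℂ) * Complex.I) ≠ 0 :=
      mul_ne_zero (by exact_mod_cast hk) Complex.I_ne_zero
    have harg : ∀ θ : ℝ, cw k θ = Complex.exp ((((k:ℝ):ℂ)*Complex.I) * θ) := by
      intro θ; rw [cw]; ring_nf
    simp_rw [harg]
    rw [integral_exp_mul_complex hc, if_neg hk]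
    have h1 : ((k:ℝ):ℂ)*Complex.I*((2*Real.pi : ℝ):ℂ) = (k:ℂ) * (2*(Real.pi:ℂ)*Complex.I) := by
      push_cast; ring
    rw [h1, Complex.exp_int_mul_two_pi_mul_I k]
    simp

lemma coeff_bound {f : ℂ → ℂ} {a b : ℕ → ℂ}
    (hrep : ∀ z ∈ Metric.ball (0:ℂ) 1,
      HasSum (fun n : ℕ => a n * z ^ n + (starRingEnd ℂ) (b n) * ((starRingEnd ℂ) z) ^ n) (f z))
    {s : ℝ} (hs0 : 0 < s) (hs1 : s < 1) :
    ∃ C : ℝ, 0 ≤ C ∧ ∃ M : ℕ, ∀ m, M ≤ m →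
      (‖a m‖ + ‖b m‖) * s ^ m ≤ C := by
  set α : ℕ → ℂ := fun m => a m * (s:ℂ)^m with hα
  set β : ℕ → ℂ := fun m => (starRingEnd ℂ) (b m) * (s:ℂ)^m with hβ
  set t : ℕ → ℝ → ℂ := fun m θ => α m * cw m θ + β m * cw (-(m:ℝ)) θ with htdef
  have htcont : ∀ m, Continuous (t m) :=
    fun m => (continuous_const.mul (cw_cont m)).add (continuous_const.mul (cw_cont (-(m:ℝ))))
  have hts : ∀ (m : ℕ) (θ : ℝ), t m θ
      = a m * ((s:ℂ) * Complex.exp ((θ:ℂ)*Complex.I)) ^ m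
        + (starRingEnd ℂ) (b m) * ((starRingEnd ℂ) ((s:ℂ) * Complex.exp ((θ:ℂ)*Complex.I))) ^ m := by
    intro m θ
    rw [zpow_eq, zbarpow_eq, htdef, hα, hβ]
    ring
  set S : ℕ → ℝ → ℂ := fun N θ => ∑ m ∈ Finset.range N, t m θ with hS
  have hScont : ∀ N, Continuous (S N) := fun N => continuous_finset_sum _ (fun m _ => htcont m)
  have hbdd : ∀ θ : ℝ, ∃ k : ℕ, ∀ N, ‖S N θ‖ ≤ k := by
    intro θ
    have hz := mem_ball_circle hs0.le hs1 θ
    have h1 : Filter.Tendsto (fun N => S N θ) atTop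
        (𝓝 (f ((s:ℂ) * Complex.exp ((θ:ℂ)*Complex.I)))) := by
      have h2 := (hrep _ hz).tendsto_sum_nat
      convert h2 using 2 with N
      exact Finset.sum_congr rfl (fun m _ => hts m θ)
    obtain ⟨u, hu⟩ := h1.norm.bddAbove_range
    obtain ⟨k, hk⟩ := exists_nat_ge u
    exact ⟨k, fun N => le_trans (hu ⟨N, rfl⟩) hk⟩
  set A : ℕ → Set ℝ := fun k => ⋂ N, {θ : ℝ | ‖S N θ‖ ≤ k} with hA
  have hAclosed : ∀ k, IsClosed (A k) :=
    fun k => isClosed_iInter (fun N => isClosed_le (hScont N).norm continuous_const)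
  have hAcover : (⋃ k, A k) = univ := by
    rw [Set.eq_univ_iff_forall]
    intro θ
    obtain ⟨k, hk⟩ := hbdd θ
    exact Set.mem_iUnion.mpr ⟨k, Set.mem_iInter.mpr (fun N => hk N)⟩
  obtain ⟨k, hk⟩ := nonempty_interior_of_iUnion_of_closed hAclosed hAcover
  obtain ⟨θ₀, hθ₀⟩ := hk
  obtain ⟨δ, hδ0, hδball⟩ := Metric.isOpen_iff.mp isOpen_interior θ₀ hθ₀
  have hball : Metric.ball θ₀ δ ⊆ A k := hδball.trans interior_subset
  have hterm : ∀ m : ℕ, ∀ θ ∈ Metric.ball θ₀ δ, ‖t m θ‖ ≤ 2*k := by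
    intro m θ hθ
    have h1 : ∀ N, ‖S N θ‖ ≤ k := by
      have h2 := hball hθ
      rw [hA, Set.mem_iInter] at h2
      exact fun N => h2 N
    have h2 : t m θ = S (m+1) θ - S m θ := by
      rw [hS]; simp [Finset.sum_range_succ]
    rw [h2]
    calc ‖S (m+1) θ - S m θ‖ ≤ ‖S (m+1) θ‖ + ‖S m θ‖ := norm_sub_le _ _
      _ ≤ 2*k := by have g1 := h1 (m+1); have g2 := h1 m; linarith
  set c : ℝ := θ₀ - δ/2 with hc
  set d : ℝ := θ₀ + δ/2 with hd
  have hcd : c ≤ d := by rw [hc, hd]; linarith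
  have hdc : d - c = δ := by rw [hc, hd]; ring
  have hsub : Set.uIoc c d ⊆ Metric.ball θ₀ δ := by
    rw [Set.uIoc_of_le hcd]
    intro x hx
    rw [Metric.mem_ball, Real.dist_eq, abs_sub_lt_iff]
    obtain ⟨h1, h2⟩ := hx
    rw [hc] at h1; rw [hd] at h2
    constructor <;> linarith
  have hk0 : (0:ℝ) ≤ k := Nat.cast_nonneg k
  -- key estimate
  have key : ∀ m : ℕ, 1 ≤ m → (1:ℝ)/m ≤ δ/2 → ‖α m‖ + ‖β m‖ ≤ 8*k := by
    intro m hm hmδ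
    have hm0 : (0:ℝ) < m := by exact_mod_cast hm
    have hcomp : ∀ w : ℝ, (∫ θ in c..d, t m θ * cw w θ)
        = α m * (∫ θ in c..d, cw ((m:ℝ) + w) θ)
          + β m * (∫ θ in c..d, cw (-(m:ℝ) + w) θ) := by
      intro w
      have hpt : ∀ θ : ℝ, t m θ * cw w θ
          = α m * cw ((m:ℝ) + w) θ + β m * cw (-(m:ℝ) + w) θ := by
        intro θ
        calc t m θ * cw w θ
            = α m * (cw (m:ℝ) θ * cw w θ) + β m * (cw (-(m:ℝ)) θ * cw w θ) := by
              rw [htdef]; ring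
          _ = α m * cw ((m:ℝ) + w) θ + β m * cw (-(m:ℝ) + w) θ := by rw [cw_mul, cw_mul]
      simp_rw [hpt]
      rw [intervalIntegral.integral_add (f := fun θ => α m * cw ((m:ℝ) + w) θ)
            (g := fun θ => β m * cw (-(m:ℝ) + w) θ)
            ((continuous_const.mul (cw_cont _)).intervalIntegrable c d)
            ((continuous_const.mul (cw_cont _)).intervalIntegrable c d),
          intervalIntegral.integral_const_mul, intervalIntegral.integral_const_mul]
    have hJbound : ∀ w : ℝ, ‖∫ θ in c..d, t m θ * cw w θ‖ ≤ 2*k*δ := by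
      intro w
      have hb := intervalIntegral.norm_integral_le_of_norm_le_const
        (a := c) (b := d) (C := 2*k) (f := fun θ => t m θ * cw w θ) ?_
      · rw [_root_.abs_of_nonneg (by linarith : (0:ℝ) ≤ d - c), hdc] at hb
        exact hb
      · intro x hx
        rw [norm_mul, cw_norm, mul_one]
        exact hterm m x (hsub hx)
    have hcw0 : (∫ θ in c..d, cw 0 θ) = ((d - c : ℝ):ℂ) := by
      simp_rw [cw_zero]
      rw [intervalIntegral.integral_const]
      simp
    have h2m : (0:ℝ) < 2*(m:ℝ) := by linarith
    have hEpos : ‖∫ θ in c..d, cw (2*(m:ℝ)) θ‖ ≤ 1/m := by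
      have hb := norm_integral_cw_le (q := 2*(m:ℝ)) h2m.ne' c d
      calc ‖∫ θ in c..d, cw (2*(m:ℝ)) θ‖ ≤ 2/|2*(m:ℝ)| := hb
        _ = 1/m := by rw [_root_.abs_of_pos h2m]; field_simp
    have hEneg : ‖∫ θ in c..d, cw (-(2*(m:ℝ))) θ‖ ≤ 1/m := by
      have hb := norm_integral_cw_le (q := -(2*(m:ℝ))) (neg_ne_zero.mpr h2m.ne') c d
      calc ‖∫ θ in c..d, cw (-(2*(m:ℝ))) θ‖ ≤ 2/|(-(2*(m:ℝ)))| := hb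
        _ = 1/m := by rw [abs_neg, _root_.abs_of_pos h2m]; field_simp
    -- weight -m
    have h1 : ‖α m‖ * δ ≤ 2*k*δ + ‖β m‖ * (1/m) := by
      have e := hcomp (-(m:ℝ))
      rw [show (m:ℝ) + (-(m:ℝ)) = 0 by ring, show (-(m:ℝ)) + (-(m:ℝ)) = -(2*(m:ℝ)) by ring,
        hcw0] at e
      have heq : α m * ((d-c:ℝ):ℂ)
          = (∫ θ in c..d, t m θ * cw (-(m:ℝ)) θ)
            - β m * ∫ θ in c..d, cw (-(2*(m:ℝ))) θ := by
        rw [e]; ring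
      have hnorm : ‖α m * ((d-c:ℝ):ℂ)‖ = ‖α m‖ * δ := by
        rw [norm_mul, Complex.norm_real, Real.norm_eq_abs, hdc, _root_.abs_of_pos hδ0]
      rw [← hnorm, heq]
      refine le_trans (norm_sub_le _ _) ?_
      have hb1 := hJbound (-(m:ℝ))
      have hb2 : ‖β m * ∫ θ in c..d, cw (-(2*(m:ℝ))) θ‖ ≤ ‖β m‖ * (1/m) := by
        rw [norm_mul]
        exact mul_le_mul_of_nonneg_left hEneg (norm_nonneg _)
      linarith
    -- weight m
    have h2 : ‖β m‖ * δ ≤ 2*k*δ + ‖α m‖ * (1/m) := by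
      have e := hcomp ((m:ℝ))
      rw [show (m:ℝ) + ((m:ℝ)) = 2*(m:ℝ) by ring, show (-(m:ℝ)) + ((m:ℝ)) = 0 by ring,
        hcw0] at e
      have heq : β m * ((d-c:ℝ):ℂ)
          = (∫ θ in c..d, t m θ * cw ((m:ℝ)) θ)
            - α m * ∫ θ in c..d, cw (2*(m:ℝ)) θ := by
        rw [e]; ring
      have hnorm : ‖β m * ((d-c:ℝ):ℂ)‖ = ‖β m‖ * δ := by
        rw [norm_mul, Complex.norm_real, Real.norm_eq_abs, hdc, _root_.abs_of_pos hδ0]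
      rw [← hnorm, heq]
      refine le_trans (norm_sub_le _ _) ?_
      have hb1 := hJbound ((m:ℝ))
      have hb2 : ‖α m * ∫ θ in c..d, cw (2*(m:ℝ)) θ‖ ≤ ‖α m‖ * (1/m) := by
        rw [norm_mul]
        exact mul_le_mul_of_nonneg_left hEpos (norm_nonneg _)
      linarith
    have hα0 : 0 ≤ ‖α m‖ := norm_nonneg _
    have hβ0 : 0 ≤ ‖β m‖ := norm_nonneg _
    nlinarith [mul_le_mul_of_nonneg_left hmδ hα0, mul_le_mul_of_nonneg_left hmδ hβ0]
  -- choose M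
  refine ⟨8*k, by positivity, ⌈2/δ⌉₊ + 1, fun m hm => ?_⟩
  have hm1 : 1 ≤ m := le_trans (Nat.le_add_left 1 _) hm
  have hm2 : (2:ℝ)/δ ≤ m := by
    calc (2:ℝ)/δ ≤ ⌈2/δ⌉₊ := Nat.le_ceil _
      _ ≤ m := by exact_mod_cast le_trans (Nat.le_succ _) hm
  have hm0 : (0:ℝ) < m := by exact_mod_cast hm1
  have hmδ : (1:ℝ)/m ≤ δ/2 := by
    rw [div_le_div_iff₀ hm0 two_pos]
    have hgd := (div_le_iff₀ hδ0).mp hm2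
    linarith
  have hfin : (‖a m‖ + ‖b m‖) * s ^ m = ‖α m‖ + ‖β m‖ := by
    rw [hα, hβ]
    simp only []
    rw [norm_mul, norm_mul, norm_pow, Complex.norm_real, Real.norm_eq_abs,
      _root_.abs_of_nonneg hs0.le, Complex.norm_conj]
    ring
  rw [hfin]
  exact key m hm1 hmδ

lemma coeff_summable {f : ℂ → ℂ} {a b : ℕ → ℂ}
    (hrep : ∀ z ∈ Metric.ball (0:ℂ) 1,
      HasSum (fun n : ℕ => a n * z ^ n + (starRingEnd ℂ) (b n) * ((starRingEnd ℂ) z) ^ n) (f z))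
    {r : ℝ} (hr0 : 0 ≤ r) (hr1 : r < 1) :
    Summable (fun m => (‖a m‖ + ‖b m‖) * r ^ m) := by
  set s : ℝ := (r+1)/2 with hs
  have hs0 : 0 < s := by rw [hs]; linarith
  have hs1 : s < 1 := by rw [hs]; linarith
  have hrs : r < s := by rw [hs]; linarith
  obtain ⟨C, hC0, M, hM⟩ := coeff_bound hrep hs0 hs1
  set q : ℝ := r/s with hq
  have hq0 : 0 ≤ q := div_nonneg hr0 hs0.le
  have hq1 : q < 1 := (div_lt_one hs0).mpr hrs
  set g : ℕ → ℝ := fun m => (‖a m‖ + ‖b m‖) * r ^ m with hg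
  have key : ∀ n : ℕ, g (n + M) ≤ (C * q^M) * q^n := by
    intro n
    have h1 := hM (n + M) (Nat.le_add_left M n)
    have hr_eq : r = s * q := by rw [hq]; field_simp
    have h2 : g (n+M) = ((‖a (n+M)‖ + ‖b (n+M)‖) * s^(n+M)) * q^(n+M) := by
      rw [hg]
      simp only []
      rw [hr_eq, mul_pow]
      ring
    rw [h2]
    calc ((‖a (n+M)‖ + ‖b (n+M)‖) * s^(n+M)) * q^(n+M)
        ≤ C * q^(n+M) := by
          apply mul_le_mul_of_nonneg_right h1 (pow_nonneg hq0 _)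
      _ = (C * q^M) * q^n := by rw [pow_add]; ring
  have hgeo : Summable (fun n : ℕ => (C * q^M) * q^n) :=
    (summable_geometric_of_lt_one hq0 hq1).mul_left _
  have hshift : Summable (fun n => g (n + M)) := by
    apply Summable.of_nonneg_of_le (fun n => ?_) key hgeo
    rw [hg]
    positivity
  exact (summable_nat_add_iff M).mp hshift

lemma t_weight_integral (αm βm : ℂ) (mm w c d : ℝ) :
    (∫ θ in c..d, (αm * cw mm θ + βm * cw (-mm) θ) * cw w θ)
      = αm * (∫ θ in c..d, cw (mm + w) θ) + βm * (∫ θ in c..d, cw (-mm + w) θ) := by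
  have hpt : ∀ θ : ℝ, (αm * cw mm θ + βm * cw (-mm) θ) * cw w θ
      = αm * cw (mm + w) θ + βm * cw (-mm + w) θ := by
    intro θ
    calc (αm * cw mm θ + βm * cw (-mm) θ) * cw w θ
        = αm * (cw mm θ * cw w θ) + βm * (cw (-mm) θ * cw w θ) := by ring
      _ = αm * cw (mm + w) θ + βm * cw (-mm + w) θ := by rw [cw_mul, cw_mul]
  simp_rw [hpt]
  rw [intervalIntegral.integral_add (f := fun θ => αm * cw (mm + w) θ)
        (g := fun θ => βm * cw (-mm + w) θ)
        ((continuous_const.mul (cw_cont _)).intervalIntegrable c d)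
        ((continuous_const.mul (cw_cont _)).intervalIntegrable c d),
      intervalIntegral.integral_const_mul, intervalIntegral.integral_const_mul]

lemma fourier_interchange {f : ℂ → ℂ} {a b : ℕ → ℂ}
    (hrep : ∀ z ∈ Metric.ball (0:ℂ) 1,
      HasSum (fun n : ℕ => a n * z ^ n + (starRingEnd ℂ) (b n) * ((starRingEnd ℂ) z) ^ n) (f z))
    {r : ℝ} (hr0 : 0 < r) (hr1 : r < 1) (k : ℝ) :
    (∫ θ in (0:ℝ)..(2*Real.pi), f ((r:ℂ) * Complex.exp ((θ:ℂ)*Complex.I)) * cw k θ)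
      = ∑' m : ℕ, (a m * (r:ℂ)^m * (∫ θ in (0:ℝ)..(2*Real.pi), cw ((m:ℝ) + k) θ)
          + (starRingEnd ℂ) (b m) * (r:ℂ)^m * (∫ θ in (0:ℝ)..(2*Real.pi), cw (-(m:ℝ) + k) θ)) := by
  have hπ : (0:ℝ) ≤ 2*Real.pi := by positivity
  set t : ℕ → ℝ → ℂ := fun m θ =>
    a m * (r:ℂ)^m * cw m θ + (starRingEnd ℂ) (b m) * (r:ℂ)^m * cw (-(m:ℝ)) θ with htdef
  have htcont : ∀ m, Continuous (t m) :=
    fun m => (continuous_const.mul (cw_cont m)).add (continuous_const.mul (cw_cont (-(m:ℝ))))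
  set v : ℕ → ℝ := fun m => (‖a m‖ + ‖b m‖) * r ^ m with hv
  have hv0 : ∀ m, 0 ≤ v m := by intro m; rw [hv]; positivity
  have hvsum : Summable v := coeff_summable hrep hr0.le hr1
  have htbound : ∀ m θ, ‖t m θ * cw k θ‖ ≤ v m := by
    intro m θ
    rw [norm_mul, cw_norm, mul_one, htdef]
    calc ‖a m * (r:ℂ)^m * cw m θ + (starRingEnd ℂ) (b m) * (r:ℂ)^m * cw (-(m:ℝ)) θ‖
        ≤ ‖a m * (r:ℂ)^m * cw m θ‖ + ‖(starRingEnd ℂ) (b m) * (r:ℂ)^m * cw (-(m:ℝ)) θ‖ :=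
          norm_add_le _ _
      _ = ‖a m‖ * r^m + ‖b m‖ * r^m := by
          simp [norm_mul, norm_pow, cw_abs, Complex.norm_conj,
            Complex.norm_real, _root_.abs_of_nonneg hr0.le]
      _ = v m := by rw [hv]; ring
  have hpt : ∀ θ : ℝ, f ((r:ℂ) * Complex.exp ((θ:ℂ)*Complex.I)) * cw k θ
      = ∑' m, t m θ * cw k θ := by
    intro θ
    have hz := mem_ball_circle hr0.le hr1 θ
    have hHS : HasSum (fun m => t m θ) (f ((r:ℂ) * Complex.exp ((θ:ℂ)*Complex.I))) := by
      have h2 := hrep _ hz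
      have h3 : ∀ m, t m θ = a m * ((r:ℂ) * Complex.exp ((θ:ℂ)*Complex.I)) ^ m
          + (starRingEnd ℂ) (b m) * ((starRingEnd ℂ) ((r:ℂ) * Complex.exp ((θ:ℂ)*Complex.I))) ^ m := by
        intro m
        rw [zpow_eq, zbarpow_eq, htdef]
        ring
      have h4 : (fun m => t m θ) = fun m => a m * ((r:ℂ) * Complex.exp ((θ:ℂ)*Complex.I)) ^ m
          + (starRingEnd ℂ) (b m) * ((starRingEnd ℂ) ((r:ℂ) * Complex.exp ((θ:ℂ)*Complex.I))) ^ m :=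
        funext h3
      rw [h4]
      exact h2
    exact ((hHS.mul_right (cw k θ)).tsum_eq).symm
  simp_rw [hpt]
  -- interchange
  rw [intervalIntegral.integral_of_le hπ]
  rw [MeasureTheory.integral_tsum (f := fun m θ => t m θ * cw k θ)
    (fun m => ((htcont m).mul (cw_cont k)).aestronglyMeasurable)
    ?_]
  · congr 1
    funext m
    rw [← intervalIntegral.integral_of_le hπ]
    exact t_weight_integral _ _ _ _ _ _
  · -- the lintegral bound
    have hle : ∀ m, (∫⁻ θ in Set.Ioc (0:ℝ) (2*Real.pi), ‖t m θ * cw k θ‖₊ ∂MeasureTheory.volume)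
        ≤ ENNReal.ofReal (v m) * ENNReal.ofReal (2*Real.pi) := by
      intro m
      have h1 : (∫⁻ θ in Set.Ioc (0:ℝ) (2*Real.pi), ‖t m θ * cw k θ‖₊ ∂MeasureTheory.volume)
          ≤ ∫⁻ _ in Set.Ioc (0:ℝ) (2*Real.pi), ENNReal.ofReal (v m) ∂MeasureTheory.volume := by
        apply MeasureTheory.lintegral_mono
        intro θ
        have hh := ENNReal.ofReal_le_ofReal (htbound m θ)
        rwa [ofReal_norm] at hh
      rw [MeasureTheory.setLIntegral_const] at h1
      rwa [Real.volume_Ioc, sub_zero] at h1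
    apply ne_top_of_le_ne_top (ENNReal.mul_ne_top ENNReal.ofReal_ne_top ENNReal.ofReal_ne_top)
    calc (∑' m, ∫⁻ θ in Set.Ioc (0:ℝ) (2*Real.pi), ‖t m θ * cw k θ‖₊ ∂MeasureTheory.volume)
        ≤ ∑' m, ENNReal.ofReal (v m) * ENNReal.ofReal (2*Real.pi) :=
          ENNReal.tsum_le_tsum hle
      _ = (∑' m, ENNReal.ofReal (v m)) * ENNReal.ofReal (2*Real.pi) := by
          rw [ENNReal.tsum_mul_right]
      _ = ENNReal.ofReal (∑' m, v m) * ENNReal.ofReal (2*Real.pi) := by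
          rw [ENNReal.ofReal_tsum_of_nonneg hv0 hvsum]

lemma fourier_a {f : ℂ → ℂ} {a b : ℕ → ℂ}
    (hrep : ∀ z ∈ Metric.ball (0:ℂ) 1,
      HasSum (fun n : ℕ => a n * z ^ n + (starRingEnd ℂ) (b n) * ((starRingEnd ℂ) z) ^ n) (f z))
    {r : ℝ} (hr0 : 0 < r) (hr1 : r < 1) {n : ℕ} (hn : 1 ≤ n) :
    (∫ θ in (0:ℝ)..(2*Real.pi), f ((r:ℂ) * Complex.exp ((θ:ℂ)*Complex.I)) * cw (-(n:ℝ)) θ)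
      = (2*Real.pi:ℂ) * a n * (r:ℂ)^n := by
  rw [fourier_interchange hrep hr0 hr1 (-(n:ℝ))]
  rw [tsum_eq_single n ?_]
  · have e1 : (n:ℝ) + (-(n:ℝ)) = (((0:ℤ)):ℝ) := by push_cast; ring
    have e2 : (-(n:ℝ)) + (-(n:ℝ)) = (((-(2*n):ℤ)):ℝ) := by push_cast; ring
    rw [e1, e2, circleInt_cw, circleInt_cw, if_pos rfl, if_neg (by omega)]
    ring
  · intro m hm
    have e1 : (m:ℝ) + (-(n:ℝ)) = ((((m:ℤ) - n):ℤ):ℝ) := by push_cast; ring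
    have e2 : (-(m:ℝ)) + (-(n:ℝ)) = (((-((m:ℤ)+n)):ℤ):ℝ) := by push_cast; ring
    rw [e1, e2, circleInt_cw, circleInt_cw, if_neg (by omega), if_neg (by omega)]
    ring

lemma fourier_b {f : ℂ → ℂ} {a b : ℕ → ℂ}
    (hrep : ∀ z ∈ Metric.ball (0:ℂ) 1,
      HasSum (fun n : ℕ => a n * z ^ n + (starRingEnd ℂ) (b n) * ((starRingEnd ℂ) z) ^ n) (f z))
    {r : ℝ} (hr0 : 0 < r) (hr1 : r < 1) {n : ℕ} (hn : 1 ≤ n) :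
    (∫ θ in (0:ℝ)..(2*Real.pi), f ((r:ℂ) * Complex.exp ((θ:ℂ)*Complex.I)) * cw ((n:ℝ)) θ)
      = (2*Real.pi:ℂ) * (starRingEnd ℂ) (b n) * (r:ℂ)^n := by
  rw [fourier_interchange hrep hr0 hr1 ((n:ℝ))]
  rw [tsum_eq_single n ?_]
  · have e1 : (n:ℝ) + ((n:ℝ)) = ((((2*n:ℕ):ℤ)):ℝ) := by push_cast; ring
    have e2 : (-(n:ℝ)) + ((n:ℝ)) = (((0:ℤ)):ℝ) := by push_cast; ring
    rw [e1, e2, circleInt_cw, circleInt_cw, if_pos rfl, if_neg (by omega)]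
    ring
  · intro m hm
    have e1 : (m:ℝ) + ((n:ℝ)) = ((((m:ℤ) + n):ℤ):ℝ) := by push_cast; ring
    have e2 : (-(m:ℝ)) + ((n:ℝ)) = ((((n:ℤ) - m):ℤ):ℝ) := by push_cast; ring
    rw [e1, e2, circleInt_cw, circleInt_cw, if_neg (by omega), if_neg (by omega)]
    ring

lemma hasDerivAt_ofReal (x : ℝ) : HasDerivAt (fun ρ:ℝ => (ρ:ℂ)) 1 x := by
  simpa using (hasDerivAt_id x).ofReal_comp

lemma cw_hasDeriv (q : ℝ) (θ : ℝ) :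
    HasDerivAt (fun θ : ℝ => cw q θ) ((q:ℂ) * Complex.I * cw q θ) θ := by
  have h0 : (fun θ : ℝ => cw q θ) = fun θ : ℝ => Complex.exp (((q:ℂ)*Complex.I) * (θ:ℂ)) := by
    funext θ; rw [cw]; ring_nf
  rw [h0]
  have h1 : HasDerivAt (fun θ:ℝ => ((q:ℂ)*Complex.I) * (θ:ℂ)) ((q:ℂ)*Complex.I) θ := by
    simpa using (hasDerivAt_ofReal θ).const_mul ((q:ℂ)*Complex.I)
  have h2 := (Complex.hasDerivAt_exp (((q:ℂ)*Complex.I) * (θ:ℂ))).comp θ h1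
  refine h2.congr_deriv ?_
  rw [cw]
  ring_nf

lemma cw_one (θ : ℝ) : cw 1 θ = Complex.exp ((θ:ℂ)*Complex.I) := by
  rw [cw]; norm_num

lemma cw_at_zero (q : ℝ) : cw q 0 = 1 := by simp [cw]

lemma cw_int_two_pi (j : ℤ) : cw (j:ℝ) (2*Real.pi) = 1 := by
  rw [cw]
  rw [show (((j:ℝ)):ℂ) * ((2*Real.pi : ℝ):ℂ) * Complex.I = (j:ℂ) * (2*(Real.pi:ℂ)*Complex.I) by
    push_cast; ring]
  exact Complex.exp_int_mul_two_pi_mul_I j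

lemma conj_circle (r θ : ℝ) :
    (starRingEnd ℂ) ((r:ℂ) * Complex.exp ((θ:ℂ)*Complex.I)) = (r:ℂ) * cw (-1) θ := by
  have := zbarpow_eq r θ 1
  simpa using this

-- derivative in θ of the circle map
lemma circle_hasDeriv (r θ : ℝ) :
    HasDerivAt (fun θ : ℝ => (r:ℂ) * Complex.exp ((θ:ℂ)*Complex.I))
      ((r:ℂ) * Complex.exp ((θ:ℂ)*Complex.I) * Complex.I) θ := by
  have h1 : (fun θ : ℝ => (r:ℂ) * Complex.exp ((θ:ℂ)*Complex.I)) = fun θ : ℝ => (r:ℂ) * cw 1 θ := by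
    funext θ; rw [cw_one]
  rw [h1]
  have h2 := (cw_hasDeriv 1 θ).const_mul (r:ℂ)
  refine h2.congr_deriv ?_
  rw [cw_one]
  push_cast
  ring

-- derivative in ρ of the radius map
lemma radius_hasDeriv (x θ : ℝ) :
    HasDerivAt (fun ρ : ℝ => (ρ:ℂ) * Complex.exp ((θ:ℂ)*Complex.I))
      (Complex.exp ((θ:ℂ)*Complex.I)) x := by
  simpa using (hasDerivAt_ofReal x).mul_const (Complex.exp ((θ:ℂ)*Complex.I))

lemma cw_neg_two (θ : ℝ) : cw (-2) θ = Complex.exp ((-2:ℂ) * (θ:ℂ) * Complex.I) := by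
  rw [cw]; norm_num

lemma conj_exp_circle (θ : ℝ) :
    (starRingEnd ℂ) (Complex.exp ((θ:ℂ)*Complex.I)) = cw (-1) θ := by
  have := conj_circle 1 θ
  simpa using this

lemma circle_cont (x : ℝ) : Continuous (fun θ:ℝ => (x:ℂ) * Complex.exp ((θ:ℂ)*Complex.I)) := by
  fun_prop

lemma exp_circle_cont : Continuous (fun θ:ℝ => Complex.exp ((θ:ℂ)*Complex.I)) := by
  fun_prop

/-- Coefficient estimate for harmonic (K,K')-quasiconformal mappings of 𝔻 onto a
    Jordan domain with rectifiable boundary of length 2πR: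
    |aₙ| + |bₙ| ≤ (√K' + KR)/n. -/
theorem coeff_bound_perimeter (f : ℂ → ℂ) (a b : ℕ → ℂ) (K K' R : ℝ)
    (hK : 1 ≤ K) (hK' : 0 ≤ K') (hR : 0 < R)
    (hreg : ContDiffOn ℝ 1 f (Metric.ball 0 1))
    (hb0 : b 0 = 0)
    (hrep : ∀ z ∈ Metric.ball (0:ℂ) 1,
      HasSum (fun n : ℕ => a n * z ^ n + (starRingEnd ℂ) (b n) * ((starRingEnd ℂ) z) ^ n) (f z))
    (hinj : Set.InjOn f (Metric.ball 0 1))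
    (hqc : ∀ z ∈ Metric.ball (0:ℂ) 1,
      (‖wdz f z‖ + ‖wdzbar f z‖) ^ 2
        ≤ K * ((‖wdz f z‖) ^ 2 - (‖wdzbar f z‖) ^ 2) + K')
    (hper : ∀ r ∈ Set.Ioo (0:ℝ) 1,
      r * ∫ θ in (0:ℝ)..(2 * Real.pi),
        ‖wdz f (r * Complex.exp (θ * Complex.I))
          - Complex.exp (-2 * θ * Complex.I) * wdzbar f (r * Complex.exp (θ * Complex.I))‖
      ≤ 2 * Real.pi * R) :
    ∀ n : ℕ, 1 ≤ n →
      ‖a n‖ + ‖b n‖ ≤ (Real.sqrt K' + K * R) / n := by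
  intro n hn
  have hπ : (0:ℝ) < Real.pi := Real.pi_pos
  have hπ2 : (0:ℝ) ≤ 2*Real.pi := by linarith
  have hfC : ContinuousOn f (Metric.ball 0 1) := hreg.continuousOn
  have hfd : ContinuousOn (fun z => fderiv ℝ f z) (Metric.ball 0 1) :=
    hreg.continuousOn_fderiv_of_isOpen Metric.isOpen_ball le_rfl
  have hdiff : ∀ z ∈ Metric.ball (0:ℂ) 1, DifferentiableAt ℝ f z := fun z hz =>
    ((hreg.differentiableOn one_ne_zero).differentiableAt (Metric.isOpen_ball.mem_nhds hz))
  -- ==================== per-radius bound ====================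
  have Hr : ∀ r : ℝ, r ∈ Set.Ioo (0:ℝ) 1 →
      (n:ℝ) * (‖a n‖ + ‖b n‖) * r^n ≤ K*R + Real.sqrt K' := by
    intro r hr
    have hr0 : 0 < r := hr.1
    have hr1 : r < 1 := hr.2
    set z : ℝ → ℂ := fun θ => (r:ℂ) * Complex.exp ((θ:ℂ)*Complex.I) with hzdef
    have hz : ∀ θ, z θ ∈ Metric.ball (0:ℂ) 1 := fun θ => mem_ball_circle hr0.le hr1 θ
    have hzc : Continuous z := circle_cont r
    have hLcont : Continuous (fun θ => fderiv ℝ f (z θ)) := hfd.comp_continuous hzc hz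
    have hwdzc : Continuous (fun θ => wdz f (z θ)) := by
      simp only [wdz]
      exact ((hLcont.clm_apply continuous_const).sub
        (continuous_const.mul (hLcont.clm_apply continuous_const))).div_const 2
    have hwdzbarc : Continuous (fun θ => wdzbar f (z θ)) := by
      simp only [wdzbar]
      exact ((hLcont.clm_apply continuous_const).add
        (continuous_const.mul (hLcont.clm_apply continuous_const))).div_const 2
    -- ---------- radial derivative identity ----------
    have hrad : ∀ k : ℝ, HasDerivAt
        (fun ρ : ℝ => ∫ θ in (0:ℝ)..(2*Real.pi),
          f ((ρ:ℂ) * Complex.exp ((θ:ℂ)*Complex.I)) * cw k θ)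
        (∫ θ in (0:ℝ)..(2*Real.pi),
          (fderiv ℝ f (z θ)) (Complex.exp ((θ:ℂ)*Complex.I)) * cw k θ) r := by
      intro k
      set r₂ : ℝ := (1+r)/2 with hr₂
      have hr₂1 : r₂ < 1 := by rw [hr₂]; linarith
      have hr₂0 : 0 < r₂ := by rw [hr₂]; linarith
      obtain ⟨C, hC⟩ := (isCompact_closedBall (0:ℂ) r₂).exists_bound_of_continuousOn
        (hfd.mono (Metric.closedBall_subset_ball hr₂1))
      set ε : ℝ := min (r/2) ((1-r)/2) with hε
      have hε0 : 0 < ε := by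
        rw [hε]; apply lt_min <;> linarith
      have hballx : ∀ x ∈ Metric.ball r ε, 0 < x ∧ x ≤ r₂ := by
        intro x hx
        rw [Metric.mem_ball, Real.dist_eq, abs_sub_lt_iff] at hx
        have h1 : ε ≤ r/2 := min_le_left _ _
        have h2 : ε ≤ (1-r)/2 := min_le_right _ _
        constructor <;> [linarith [hx.2]; linarith [hx.1]]
      set μ : MeasureTheory.Measure ℝ := MeasureTheory.volume.restrict (Set.Ioc 0 (2*Real.pi))
        with hμ
      have key := hasDerivAt_integral_of_dominated_loc_of_deriv_le
        (F := fun (ρ : ℝ) (θ : ℝ) => f ((ρ:ℂ) * Complex.exp ((θ:ℂ)*Complex.I)) * cw k θ)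
        (F' := fun (ρ : ℝ) (θ : ℝ) =>
          (fderiv ℝ f ((ρ:ℂ) * Complex.exp ((θ:ℂ)*Complex.I))) (Complex.exp ((θ:ℂ)*Complex.I))
            * cw k θ)
        (x₀ := r) (s := Metric.ball r ε) (bound := fun _ => C) (μ := μ) (Metric.ball_mem_nhds r hε0) ?_ ?_ ?_ ?_ ?_ ?_
      · have heqf : (fun ρ : ℝ => ∫ θ in (0:ℝ)..(2*Real.pi),
            f ((ρ:ℂ) * Complex.exp ((θ:ℂ)*Complex.I)) * cw k θ)
            = (fun ρ : ℝ => ∫ θ, f ((ρ:ℂ) * Complex.exp ((θ:ℂ)*Complex.I)) * cw k θ ∂μ) :=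
          funext (fun ρ => intervalIntegral.integral_of_le hπ2)
        rw [heqf, intervalIntegral.integral_of_le hπ2]
        exact key.2
      · filter_upwards [Ioo_mem_nhds hr0 hr1] with x hx
        exact ((hfC.comp_continuous (circle_cont x)
          (fun θ => mem_ball_circle hx.1.le hx.2 θ)).mul (cw_cont k)).aestronglyMeasurable
      · exact ((hfC.comp_continuous hzc hz).mul (cw_cont k)).integrableOn_Ioc
      · exact ((hLcont.clm_apply exp_circle_cont).mul (cw_cont k)).aestronglyMeasurable
      · apply Filter.Eventually.of_forall
        intro θ x hx
        rw [norm_mul, cw_norm, mul_one]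
        calc ‖(fderiv ℝ f ((x:ℂ) * Complex.exp ((θ:ℂ)*Complex.I))) (Complex.exp ((θ:ℂ)*Complex.I))‖
            ≤ ‖fderiv ℝ f ((x:ℂ) * Complex.exp ((θ:ℂ)*Complex.I))‖
              * ‖Complex.exp ((θ:ℂ)*Complex.I)‖ :=
              (fderiv ℝ f _).le_opNorm _
          _ ≤ C := by
              have h1 : ‖Complex.exp ((θ:ℂ)*Complex.I)‖ = 1 := by
                rw [← cw_one]; exact cw_norm 1 θ
              rw [h1, mul_one]
              apply hC
              rw [Metric.mem_closedBall, Complex.dist_eq, sub_zero, norm_mul, Complex.norm_real, Real.norm_eq_abs,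
    Complex.norm_exp_ofReal_mul_I, mul_one]
              rw [_root_.abs_of_pos (hballx x hx).1]
              exact (hballx x hx).2
      · rw [hμ]
        exact MeasureTheory.integrableOn_const (by
          rw [Real.volume_Ioc]; exact ENNReal.ofReal_ne_top)
      · apply Filter.Eventually.of_forall
        intro θ x hx
        have hmem : (x:ℂ) * Complex.exp ((θ:ℂ)*Complex.I) ∈ Metric.ball (0:ℂ) 1 := by
          apply mem_ball_circle (hballx x hx).1.le (lt_of_le_of_lt (hballx x hx).2 hr₂1)
        exact (((hdiff _ hmem).hasFDerivAt.comp_hasDerivAt x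
          (radius_hasDeriv x θ)).mul_const (cw k θ))
    -- ---------- theta-part identity ----------
    have htheta : ∀ k : ℤ, (∫ θ in (0:ℝ)..(2*Real.pi), (fderiv ℝ f (z θ)) (z θ * Complex.I) * cw (k:ℝ) θ)
        = (-(k:ℂ)) * Complex.I * ∫ θ in (0:ℝ)..(2*Real.pi), f (z θ) * cw (k:ℝ) θ := by
      intro k
      have hG : ∀ θ : ℝ, HasDerivAt (fun θ => f (z θ) * cw (k:ℝ) θ)
          ((fderiv ℝ f (z θ)) (z θ * Complex.I) * cw (k:ℝ) θ
            + f (z θ) * (((k:ℝ):ℂ) * Complex.I * cw (k:ℝ) θ)) θ := by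
        intro θ
        have h1 : HasDerivAt (fun θ => f (z θ)) ((fderiv ℝ f (z θ)) (z θ * Complex.I)) θ :=
          (hdiff _ (hz θ)).hasFDerivAt.comp_hasDerivAt θ (circle_hasDeriv r θ)
        exact h1.mul (cw_hasDeriv k θ)
      have hint1 : IntervalIntegrable
          (fun θ => (fderiv ℝ f (z θ)) (z θ * Complex.I) * cw (k:ℝ) θ)
          MeasureTheory.volume 0 (2*Real.pi) :=
        ((hLcont.clm_apply (hzc.mul continuous_const)).mul (cw_cont _)).intervalIntegrable _ _
      have hint2 : IntervalIntegrable
          (fun θ => f (z θ) * (((k:ℝ):ℂ) * Complex.I * cw (k:ℝ) θ))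
          MeasureTheory.volume 0 (2*Real.pi) :=
        ((hfC.comp_continuous hzc hz).mul (continuous_const.mul (cw_cont _))).intervalIntegrable _ _
      have hFTC := intervalIntegral.integral_eq_sub_of_hasDerivAt
        (f := fun θ => f (z θ) * cw (k:ℝ) θ) (fun θ _ => hG θ) (hint1.add hint2)
      have hends : f (z (2*Real.pi)) * cw (k:ℝ) (2*Real.pi) - f (z 0) * cw (k:ℝ) 0 = 0 := by
        have hz0 : z (2*Real.pi) = z 0 := by
          rw [hzdef]
          simp only []
          congr 1
          rw [show ((2*Real.pi : ℝ):ℂ) * Complex.I = 2*(Real.pi:ℂ)*Complex.I by push_cast; ring,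
            Complex.exp_two_pi_mul_I]
          norm_num
        rw [hz0, cw_int_two_pi, cw_at_zero]
        ring
      rw [hends] at hFTC
      rw [intervalIntegral.integral_add hint1 hint2] at hFTC
      have hsnd : (∫ θ in (0:ℝ)..(2*Real.pi), f (z θ) * (((k:ℝ):ℂ) * Complex.I * cw (k:ℝ) θ))
          = ((k:ℂ) * Complex.I) * ∫ θ in (0:ℝ)..(2*Real.pi), f (z θ) * cw (k:ℝ) θ := by
        rw [← intervalIntegral.integral_const_mul]
        congr 1
        funext θ
        push_cast
        ring
      rw [hsnd] at hFTC
      have : (∫ θ in (0:ℝ)..(2*Real.pi), (fderiv ℝ f (z θ)) (z θ * Complex.I) * cw (k:ℝ) θ)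
          = -(((k:ℂ) * Complex.I) * ∫ θ in (0:ℝ)..(2*Real.pi), f (z θ) * cw (k:ℝ) θ) := by
        linear_combination hFTC
      rw [this]; ring
    -- ---------- Fourier values ----------
    have hΦa : ∀ ρ : ℝ, ρ ∈ Set.Ioo (0:ℝ) 1 →
        (∫ θ in (0:ℝ)..(2*Real.pi), f ((ρ:ℂ) * Complex.exp ((θ:ℂ)*Complex.I)) * cw (-(n:ℝ)) θ)
          = (2*Real.pi:ℂ) * a n * (ρ:ℂ)^n :=
      fun ρ hρ => fourier_a hrep hρ.1 hρ.2 hn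
    have hΦb : ∀ ρ : ℝ, ρ ∈ Set.Ioo (0:ℝ) 1 →
        (∫ θ in (0:ℝ)..(2*Real.pi), f ((ρ:ℂ) * Complex.exp ((θ:ℂ)*Complex.I)) * cw ((n:ℝ)) θ)
          = (2*Real.pi:ℂ) * (starRingEnd ℂ) (b n) * (ρ:ℂ)^n :=
      fun ρ hρ => fourier_b hrep hρ.1 hρ.2 hn
    have hpowd : HasDerivAt (fun ρ:ℝ => ((ρ:ℂ))^n) ((n:ℂ) * (r:ℂ)^(n-1)) r := by
      have h1 := (hasDerivAt_pow n ((r:ℂ))).comp r (hasDerivAt_ofReal r)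
      exact h1.congr_deriv (mul_one _)
    -- ---------- radial Fourier coefficients ----------
    have hDa : (∫ θ in (0:ℝ)..(2*Real.pi),
          (fderiv ℝ f (z θ)) (Complex.exp ((θ:ℂ)*Complex.I)) * cw (-(n:ℝ)) θ)
        = (2*Real.pi:ℂ) * a n * ((n:ℂ) * (r:ℂ)^(n-1)) := by
      have hpoly := hpowd.const_mul ((2*Real.pi:ℂ) * a n)
      have hev : (fun ρ:ℝ => ∫ θ in (0:ℝ)..(2*Real.pi),
            f ((ρ:ℂ) * Complex.exp ((θ:ℂ)*Complex.I)) * cw (-(n:ℝ)) θ)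
          =ᶠ[nhds r] (fun ρ:ℝ => (2*Real.pi:ℂ) * a n * (ρ:ℂ)^n) := by
        filter_upwards [Ioo_mem_nhds hr0 hr1] with ρ hρ using hΦa ρ hρ
      exact ((hrad (-(n:ℝ)))).unique (hpoly.congr_of_eventuallyEq hev)
    have hDb : (∫ θ in (0:ℝ)..(2*Real.pi),
          (fderiv ℝ f (z θ)) (Complex.exp ((θ:ℂ)*Complex.I)) * cw ((n:ℝ)) θ)
        = (2*Real.pi:ℂ) * (starRingEnd ℂ) (b n) * ((n:ℂ) * (r:ℂ)^(n-1)) := by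
      have hpoly := hpowd.const_mul ((2*Real.pi:ℂ) * (starRingEnd ℂ) (b n))
      have hev : (fun ρ:ℝ => ∫ θ in (0:ℝ)..(2*Real.pi),
            f ((ρ:ℂ) * Complex.exp ((θ:ℂ)*Complex.I)) * cw ((n:ℝ)) θ)
          =ᶠ[nhds r] (fun ρ:ℝ => (2*Real.pi:ℂ) * (starRingEnd ℂ) (b n) * (ρ:ℂ)^n) := by
        filter_upwards [Ioo_mem_nhds hr0 hr1] with ρ hρ using hΦb ρ hρ
      exact ((hrad ((n:ℝ)))).unique (hpoly.congr_of_eventuallyEq hev)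
    -- ---------- theta Fourier coefficients ----------
    have hTa : (∫ θ in (0:ℝ)..(2*Real.pi), (fderiv ℝ f (z θ)) (z θ * Complex.I) * cw (-(n:ℝ)) θ)
        = (n:ℂ) * Complex.I * ((2*Real.pi:ℂ) * a n * (r:ℂ)^n) := by
      have h1 := htheta (-(n:ℤ))
      rw [show (((-(n:ℤ)):ℤ):ℝ) = -(n:ℝ) by push_cast; ring] at h1
      have h2 : (∫ θ in (0:ℝ)..(2*Real.pi), f (z θ) * cw (-(n:ℝ)) θ)
          = (2*Real.pi:ℂ) * a n * (r:ℂ)^n := hΦa r hr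
      rw [h1, h2]
      push_cast
      ring
    have hTb : (∫ θ in (0:ℝ)..(2*Real.pi), (fderiv ℝ f (z θ)) (z θ * Complex.I) * cw ((n:ℝ)) θ)
        = -(n:ℂ) * Complex.I * ((2*Real.pi:ℂ) * (starRingEnd ℂ) (b n) * (r:ℂ)^n) := by
      have h1 := htheta ((n:ℤ))
      rw [show (((n:ℤ)):ℝ) = (n:ℝ) by push_cast; ring] at h1
      have h2 : (∫ θ in (0:ℝ)..(2*Real.pi), f (z θ) * cw ((n:ℝ)) θ)
          = (2*Real.pi:ℂ) * (starRingEnd ℂ) (b n) * (r:ℂ)^n := hΦb r hr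
      rw [h1, h2]
      push_cast
      ring
    have hrne : ((r:ℝ):ℂ) ≠ 0 := by exact_mod_cast hr0.ne'
    have hrpow : (r:ℂ)^n = (r:ℂ)^(n-1) * r := by
      conv_lhs => rw [show n = (n-1)+1 by omega]
      rw [pow_succ]
    -- ---------- the X integral ----------
    have hXpt : ∀ θ:ℝ, wdz f (z θ) * cw 1 θ * cw (-(n:ℝ)) θ
        = (2:ℂ)⁻¹ * ((fderiv ℝ f (z θ)) (Complex.exp ((θ:ℂ)*Complex.I)) * cw (-(n:ℝ)) θ)
          + (2*Complex.I*(r:ℂ))⁻¹ * ((fderiv ℝ f (z θ)) (z θ * Complex.I) * cw (-(n:ℝ)) θ) := by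
      intro θ
      rw [fderiv_apply_wdz f (z θ) (Complex.exp ((θ:ℂ)*Complex.I)),
          fderiv_apply_wdz f (z θ) (z θ * Complex.I)]
      rw [map_mul, Complex.conj_I, conj_exp_circle]
      rw [hzdef]
      simp only []
      rw [conj_circle, ← cw_one]
      have hI := Complex.I_ne_zero
      field_simp
      ring
    have hXint1 : IntervalIntegrable
        (fun θ => (2:ℂ)⁻¹ * ((fderiv ℝ f (z θ)) (Complex.exp ((θ:ℂ)*Complex.I)) * cw (-(n:ℝ)) θ))
        MeasureTheory.volume 0 (2*Real.pi) :=
      (continuous_const.mul ((hLcont.clm_apply exp_circle_cont).mul (cw_cont _))).intervalIntegrable _ _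
    have hXint2 : IntervalIntegrable
        (fun θ => (2*Complex.I*(r:ℂ))⁻¹ * ((fderiv ℝ f (z θ)) (z θ * Complex.I) * cw (-(n:ℝ)) θ))
        MeasureTheory.volume 0 (2*Real.pi) :=
      (continuous_const.mul ((hLcont.clm_apply (hzc.mul continuous_const)).mul (cw_cont _))).intervalIntegrable _ _
    have hX : (∫ θ in (0:ℝ)..(2*Real.pi), wdz f (z θ) * cw 1 θ * cw (-(n:ℝ)) θ)
        = (2*Real.pi:ℂ) * a n * ((n:ℂ) * (r:ℂ)^(n-1)) := by
      have hsplit : (∫ θ in (0:ℝ)..(2*Real.pi), wdz f (z θ) * cw 1 θ * cw (-(n:ℝ)) θ)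
          = (2:ℂ)⁻¹ * (∫ θ in (0:ℝ)..(2*Real.pi),
              (fderiv ℝ f (z θ)) (Complex.exp ((θ:ℂ)*Complex.I)) * cw (-(n:ℝ)) θ)
            + (2*Complex.I*(r:ℂ))⁻¹ * (∫ θ in (0:ℝ)..(2*Real.pi),
              (fderiv ℝ f (z θ)) (z θ * Complex.I) * cw (-(n:ℝ)) θ) := by
        simp_rw [hXpt]
        rw [intervalIntegral.integral_add hXint1 hXint2,
          intervalIntegral.integral_const_mul, intervalIntegral.integral_const_mul]
      rw [hsplit, hDa, hTa, hrpow]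
      have hI := Complex.I_ne_zero
      field_simp
      ring
    -- ---------- the Y integral ----------
    have hYpt : ∀ θ:ℝ, wdzbar f (z θ) * cw (-1) θ * cw ((n:ℝ)) θ
        = (2:ℂ)⁻¹ * ((fderiv ℝ f (z θ)) (Complex.exp ((θ:ℂ)*Complex.I)) * cw ((n:ℝ)) θ)
          - (2*Complex.I*(r:ℂ))⁻¹ * ((fderiv ℝ f (z θ)) (z θ * Complex.I) * cw ((n:ℝ)) θ) := by
      intro θ
      rw [fderiv_apply_wdz f (z θ) (Complex.exp ((θ:ℂ)*Complex.I)),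
          fderiv_apply_wdz f (z θ) (z θ * Complex.I)]
      rw [map_mul, Complex.conj_I, conj_exp_circle]
      rw [hzdef]
      simp only []
      rw [conj_circle, ← cw_one]
      have hI := Complex.I_ne_zero
      field_simp
      ring
    have hYint1 : IntervalIntegrable
        (fun θ => (2:ℂ)⁻¹ * ((fderiv ℝ f (z θ)) (Complex.exp ((θ:ℂ)*Complex.I)) * cw ((n:ℝ)) θ))
        MeasureTheory.volume 0 (2*Real.pi) :=
      (continuous_const.mul ((hLcont.clm_apply exp_circle_cont).mul (cw_cont _))).intervalIntegrable _ _
    have hYint2 : IntervalIntegrable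
        (fun θ => (2*Complex.I*(r:ℂ))⁻¹ * ((fderiv ℝ f (z θ)) (z θ * Complex.I) * cw ((n:ℝ)) θ))
        MeasureTheory.volume 0 (2*Real.pi) :=
      (continuous_const.mul ((hLcont.clm_apply (hzc.mul continuous_const)).mul (cw_cont _))).intervalIntegrable _ _
    have hY : (∫ θ in (0:ℝ)..(2*Real.pi), wdzbar f (z θ) * cw (-1) θ * cw ((n:ℝ)) θ)
        = (2*Real.pi:ℂ) * (starRingEnd ℂ) (b n) * ((n:ℂ) * (r:ℂ)^(n-1)) := by
      have hsplit : (∫ θ in (0:ℝ)..(2*Real.pi), wdzbar f (z θ) * cw (-1) θ * cw ((n:ℝ)) θ)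
          = (2:ℂ)⁻¹ * (∫ θ in (0:ℝ)..(2*Real.pi),
              (fderiv ℝ f (z θ)) (Complex.exp ((θ:ℂ)*Complex.I)) * cw ((n:ℝ)) θ)
            - (2*Complex.I*(r:ℂ))⁻¹ * (∫ θ in (0:ℝ)..(2*Real.pi),
              (fderiv ℝ f (z θ)) (z θ * Complex.I) * cw ((n:ℝ)) θ) := by
        simp_rw [hYpt]
        rw [intervalIntegral.integral_sub hYint1 hYint2,
          intervalIntegral.integral_const_mul, intervalIntegral.integral_const_mul]
      rw [hsplit, hDb, hTb, hrpow]
      have hI := Complex.I_ne_zero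
      field_simp
      ring
    -- ---------- norm bounds ----------
    have habs_pre : ∀ c : ℂ, ‖(2*Real.pi:ℂ) * c * ((n:ℂ) * (r:ℂ)^(n-1))‖
        = 2*Real.pi * (n:ℝ) * r^(n-1) * ‖c‖ := by
      intro c
      simp only [norm_mul, norm_pow]
      rw [Complex.norm_two, Complex.norm_real, Real.norm_eq_abs, Complex.norm_real, Real.norm_eq_abs, Complex.norm_natCast,
        _root_.abs_of_pos Real.pi_pos, _root_.abs_of_nonneg hr0.le]
      ring
    have hXnorm : 2*Real.pi * (n:ℝ) * r^(n-1) * ‖a n‖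
        ≤ ∫ θ in (0:ℝ)..(2*Real.pi), ‖wdz f (z θ)‖ := by
      rw [← habs_pre (a n), ← hX]
      calc ‖∫ θ in (0:ℝ)..(2*Real.pi), wdz f (z θ) * cw 1 θ * cw (-(n:ℝ)) θ‖
          ≤ ∫ θ in (0:ℝ)..(2*Real.pi), ‖wdz f (z θ) * cw 1 θ * cw (-(n:ℝ)) θ‖ :=
            intervalIntegral.norm_integral_le_integral_norm hπ2
        _ = ∫ θ in (0:ℝ)..(2*Real.pi), ‖wdz f (z θ)‖ := by
            simp_rw [norm_mul, cw_norm, mul_one]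
    have hYnorm : 2*Real.pi * (n:ℝ) * r^(n-1) * ‖b n‖
        ≤ ∫ θ in (0:ℝ)..(2*Real.pi), ‖wdzbar f (z θ)‖ := by
      have hconj : ‖b n‖ = ‖(starRingEnd ℂ) (b n)‖ :=
        (Complex.norm_conj _).symm
      rw [hconj, ← habs_pre ((starRingEnd ℂ) (b n)), ← hY]
      calc ‖∫ θ in (0:ℝ)..(2*Real.pi), wdzbar f (z θ) * cw (-1) θ * cw ((n:ℝ)) θ‖
          ≤ ∫ θ in (0:ℝ)..(2*Real.pi), ‖wdzbar f (z θ) * cw (-1) θ * cw ((n:ℝ)) θ‖ :=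
            intervalIntegral.norm_integral_le_integral_norm hπ2
        _ = ∫ θ in (0:ℝ)..(2*Real.pi), ‖wdzbar f (z θ)‖ := by
            simp_rw [norm_mul, cw_norm, mul_one]
    -- ---------- QC pointwise ----------
    have hexp2c : Continuous (fun θ:ℝ => Complex.exp (-2 * (θ:ℂ) * Complex.I)) := by fun_prop
    have habsc : Continuous (fun θ => ‖wdz f (z θ)‖) :=
      continuous_norm.comp hwdzc
    have habsbc : Continuous (fun θ => ‖wdzbar f (z θ)‖) :=
      continuous_norm.comp hwdzbarc
    have htc : Continuous (fun θ:ℝ =>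
        ‖wdz f (z θ) - Complex.exp (-2 * (θ:ℂ) * Complex.I) * wdzbar f (z θ)‖) :=
      continuous_norm.comp (hwdzc.sub (hexp2c.mul hwdzbarc))
    have hqC : ∀ θ:ℝ, ‖wdz f (z θ)‖ + ‖wdzbar f (z θ)‖
        ≤ K * ‖wdz f (z θ) - Complex.exp (-2 * (θ:ℂ) * Complex.I) * wdzbar f (z θ)‖
          + Real.sqrt K' := by
      intro θ
      have habse : ‖Complex.exp (-2 * (θ:ℂ) * Complex.I) * wdzbar f (z θ)‖
          = ‖wdzbar f (z θ)‖ := by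
        rw [norm_mul, show (-2 * (θ:ℂ) * Complex.I) = (((-2*θ:ℝ)):ℂ)*Complex.I by push_cast; ring,
          Complex.norm_exp_ofReal_mul_I, one_mul]
      apply qc_pointwise hK hK' (norm_nonneg _) (norm_nonneg _)
        (hqc _ (hz θ)) ?_ (norm_nonneg _)
      have h1 := norm_sub_norm_le (wdz f (z θ))
        (Complex.exp (-2 * (θ:ℂ) * Complex.I) * wdzbar f (z θ))
      rw [habse] at h1
      exact h1
    -- ---------- integral inequality ----------
    have hmono : (∫ θ in (0:ℝ)..(2*Real.pi),
          (‖wdz f (z θ)‖ + ‖wdzbar f (z θ)‖))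
        ≤ K * (∫ θ in (0:ℝ)..(2*Real.pi),
            ‖wdz f (z θ) - Complex.exp (-2 * (θ:ℂ) * Complex.I) * wdzbar f (z θ)‖)
          + Real.sqrt K' * (2*Real.pi) := by
      have h1 : (∫ θ in (0:ℝ)..(2*Real.pi),
            (‖wdz f (z θ)‖ + ‖wdzbar f (z θ)‖))
          ≤ ∫ θ in (0:ℝ)..(2*Real.pi),
              (K * ‖wdz f (z θ)
                - Complex.exp (-2 * (θ:ℂ) * Complex.I) * wdzbar f (z θ)‖ + Real.sqrt K') := by
        apply intervalIntegral.integral_mono_on hπ2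
          ((habsc.add habsbc).intervalIntegrable _ _)
          (((continuous_const.mul htc).add continuous_const).intervalIntegrable _ _)
          (fun θ _ => hqC θ)
      have h2 : (∫ θ in (0:ℝ)..(2*Real.pi),
            (K * ‖wdz f (z θ)
              - Complex.exp (-2 * (θ:ℂ) * Complex.I) * wdzbar f (z θ)‖ + Real.sqrt K'))
          = K * (∫ θ in (0:ℝ)..(2*Real.pi),
              ‖wdz f (z θ) - Complex.exp (-2 * (θ:ℂ) * Complex.I) * wdzbar f (z θ)‖)
            + Real.sqrt K' * (2*Real.pi) := by
        rw [intervalIntegral.integral_add (f := fun θ => K * ‖wdz f (z θ) - Complex.exp (-2 * (θ:ℂ) * Complex.I) * wdzbar f (z θ)‖)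
          ((continuous_const.mul htc).intervalIntegrable _ _)
          (intervalIntegrable_const), intervalIntegral.integral_const_mul,
          intervalIntegral.integral_const]
        rw [sub_zero, smul_eq_mul]
        ring
      rw [h2] at h1
      exact h1
    -- ---------- perimeter bound ----------
    have hperT : (∫ θ in (0:ℝ)..(2*Real.pi),
          ‖wdz f (z θ) - Complex.exp (-2 * (θ:ℂ) * Complex.I) * wdzbar f (z θ)‖)
        ≤ 2*Real.pi*R/r := by
      rw [le_div_iff₀ hr0]
      have h1 := hper r hr
      calc (∫ θ in (0:ℝ)..(2*Real.pi),
            ‖wdz f (z θ) - Complex.exp (-2 * (θ:ℂ) * Complex.I) * wdzbar f (z θ)‖) * r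
          = r * ∫ θ in (0:ℝ)..(2*Real.pi),
            ‖wdz f (z θ) - Complex.exp (-2 * (θ:ℂ) * Complex.I) * wdzbar f (z θ)‖ := by
            ring
        _ ≤ 2*Real.pi*R := h1
    -- ---------- combine ----------
    have hsplitLHS : (∫ θ in (0:ℝ)..(2*Real.pi),
          (‖wdz f (z θ)‖ + ‖wdzbar f (z θ)‖))
        = (∫ θ in (0:ℝ)..(2*Real.pi), ‖wdz f (z θ)‖)
          + (∫ θ in (0:ℝ)..(2*Real.pi), ‖wdzbar f (z θ)‖) :=
      intervalIntegral.integral_add (habsc.intervalIntegrable _ _) (habsbc.intervalIntegrable _ _)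
    have hKnn : (0:ℝ) ≤ K := by linarith
    have hbig : 2*Real.pi * (n:ℝ) * r^(n-1) * ‖a n‖
        + 2*Real.pi * (n:ℝ) * r^(n-1) * ‖b n‖
        ≤ K * (2*Real.pi*R/r) + Real.sqrt K' * (2*Real.pi) := by
      have h3 := mul_le_mul_of_nonneg_left hperT hKnn
      linarith [hXnorm, hYnorm, hmono, hsplitLHS, h3]
    have hrn : r^(n-1) * r = r^n := by
      rw [← pow_succ]
      congr 1
      omega
    have h4 := mul_le_mul_of_nonneg_right hbig hr0.le
    have e1 : (2*Real.pi * (n:ℝ) * r^(n-1) * ‖a n‖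
          + 2*Real.pi * (n:ℝ) * r^(n-1) * ‖b n‖) * r
        = 2*Real.pi * ((n:ℝ) * (‖a n‖ + ‖b n‖) * r^n) := by
      rw [← hrn]; ring
    have e2 : (K * (2*Real.pi*R/r) + Real.sqrt K' * (2*Real.pi)) * r
        = 2*Real.pi * (K*R + Real.sqrt K' * r) := by field_simp
    rw [e1, e2] at h4
    have h5 : (n:ℝ) * (‖a n‖ + ‖b n‖) * r^n
        ≤ K*R + Real.sqrt K' * r :=
      le_of_mul_le_mul_left h4 (by positivity)
    have h6 : Real.sqrt K' * r ≤ Real.sqrt K' := by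
      nlinarith [Real.sqrt_nonneg K']
    linarith
  -- ==================== limit r → 1 ====================
  have hlim : Filter.Tendsto
      (fun r : ℝ => (n:ℝ) * (‖a n‖ + ‖b n‖) * r^n)
      (nhdsWithin (1:ℝ) (Set.Iio 1)) (nhds ((n:ℝ) * (‖a n‖ + ‖b n‖))) := by
    have h1 : Filter.Tendsto
        (fun r : ℝ => (n:ℝ) * (‖a n‖ + ‖b n‖) * r^n)
        (nhds 1) (nhds ((n:ℝ) * (‖a n‖ + ‖b n‖) * 1^n)) :=
      ((continuous_const.mul (continuous_pow n)).tendsto 1).congr (fun x => by simp only [Pi.mul_apply])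
    rw [one_pow, mul_one] at h1
    exact h1.mono_left nhdsWithin_le_nhds
  have hle : (n:ℝ) * (‖a n‖ + ‖b n‖) ≤ K*R + Real.sqrt K' := by
    apply le_of_tendsto hlim
    filter_upwards [Ioo_mem_nhdsLT_of_mem
      (show (1:ℝ) ∈ Set.Ioc (0:ℝ) 1 by constructor <;> norm_num)] with r hrr
    exact Hr r hrr
  have hn0 : (0:ℝ) < n := by exact_mod_cast hn
  rw [le_div_iff₀ hn0]
  nlinarith [hle]
end

section
/- Let f be a harmonic mapping of the unit disk satisfying |f_z(z)| ≤ R/(1−|z|²) for all z ∈ 𝔻, and suppose ‖D_f(z)‖² ≤ K J_f(z) + K' with K ≥ 1, K' ≥ 0. Then ‖D_f(z)‖ ≤ (R + (−R + √(K' + KK' + K²R²))/(1+K)) · 1/(1−|z|²) for all z ∈ 𝔻. -/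
open Complex Metric Set

private lemma key_alg (K K' R a b t : ℝ)
    (hK : 1 ≤ K) (hK' : 0 ≤ K') (hR : 0 < R)
    (ha0 : 0 ≤ a) (hb0 : 0 ≤ b) (ht1 : 1 ≤ t)
    (haRt : a ≤ R * t)
    (hq : (a + b) ^ 2 ≤ K * (a ^ 2 - b ^ 2) + K') :
    a + b ≤ (R + (-R + Real.sqrt (K' + K * K' + K ^ 2 * R ^ 2)) / (1 + K)) * t := by
  have ht0 : 0 ≤ t := by linarith
  set s := Real.sqrt (K' + K * K' + K ^ 2 * R ^ 2) with hs_def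
  have hs0 : 0 ≤ s := Real.sqrt_nonneg _
  have hs2 : s ^ 2 = K' + K * K' + K ^ 2 * R ^ 2 := by
    rw [hs_def, Real.sq_sqrt]; nlinarith
  have h1 : ((1 + K) * b + a) ^ 2 ≤ K ^ 2 * a ^ 2 + (1 + K) * K' := by
    nlinarith [hq, sq_nonneg (a - b), sq_nonneg (a + b)]
  have h2 : (1 + K) * b + a ≤ t * s := by
    have hts : K ^ 2 * a ^ 2 + (1 + K) * K' ≤ (t * s) ^ 2 := by
      have heq : (t * s) ^ 2 = t ^ 2 * (K' + K * K' + K ^ 2 * R ^ 2) := by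
        rw [mul_pow, hs2]
      rw [heq]
      have haa : a ^ 2 ≤ (R * t) ^ 2 := by nlinarith
      have htt : 1 ≤ t ^ 2 := by nlinarith
      nlinarith [mul_le_mul_of_nonneg_left haa (sq_nonneg K),
        mul_nonneg (mul_nonneg (sub_nonneg.2 htt) (by linarith : (0:ℝ) ≤ 1 + K)) hK']
    have hnn : 0 ≤ (1 + K) * b + a := by nlinarith
    have h2' := Real.sqrt_le_sqrt (h1.trans hts)
    rwa [Real.sqrt_sq hnn, Real.sqrt_sq (mul_nonneg ht0 hs0)] at h2'
  have hKpos : (0:ℝ) < 1 + K := by linarith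
  have h3 : (a + b) * (1 + K) ≤ (K * R + s) * t := by
    nlinarith [h2, mul_le_mul_of_nonneg_left haRt (by linarith : (0:ℝ) ≤ K)]
  have h4 : (a + b) * (1 + K) ≤ ((R + (-R + s) / (1 + K)) * t) * (1 + K) := by
    have heq : ((R + (-R + s) / (1 + K)) * t) * (1 + K) = (K * R + s) * t := by
      have hdiv : (-R + s) / (1 + K) * (1 + K) = -R + s :=
        div_mul_cancel₀ _ (ne_of_gt hKpos)
      linear_combination t * hdiv
    rw [heq]; exact h3
  exact le_of_mul_le_mul_right h4 hKpos

/-- Distortion estimate: if f is harmonic in 𝔻 with |f_z(z)| ≤ R/(1−|z|²) and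
    ‖D_f‖² ≤ K J_f + K', then
    ‖D_f(z)‖ ≤ (R + (−R + √(K' + KK' + K²R²))/(1+K)) / (1−|z|²). -/
theorem distortion_bound (f : ℂ → ℂ) (K K' R : ℝ)
    (hK : 1 ≤ K) (hK' : 0 ≤ K') (hR : 0 < R)
    (hreg : ContDiffOn ℝ 2 f (Metric.ball 0 1))
    (hharm : ∀ z ∈ Metric.ball (0:ℂ) 1,
      fderiv ℝ (fun w => fderiv ℝ f w 1) z 1
        + fderiv ℝ (fun w => fderiv ℝ f w Complex.I) z Complex.I = 0)
    (hfz : ∀ z ∈ Metric.ball (0:ℂ) 1,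
      ‖wdz f z‖ ≤ R / (1 - (‖z‖) ^ 2))
    (hqc : ∀ z ∈ Metric.ball (0:ℂ) 1,
      (‖wdz f z‖ + ‖wdzbar f z‖) ^ 2
        ≤ K * ((‖wdz f z‖) ^ 2 - (‖wdzbar f z‖) ^ 2) + K') :
    ∀ z ∈ Metric.ball (0:ℂ) 1,
      ‖wdz f z‖ + ‖wdzbar f z‖
        ≤ (R + (-R + Real.sqrt (K' + K * K' + K ^ 2 * R ^ 2)) / (1 + K))
            * (1 / (1 - (‖z‖) ^ 2)) := by
  intro z hz
  have hz1 : ‖z‖ < 1 := by simpa using hz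
  have hd : 0 < 1 - (‖z‖) ^ 2 := by nlinarith [norm_nonneg z]
  have ht1 : 1 ≤ 1 / (1 - (‖z‖) ^ 2) := by
    rw [le_div_iff₀ hd]; nlinarith [norm_nonneg z]
  have haRt : ‖wdz f z‖ ≤ R * (1 / (1 - (‖z‖) ^ 2)) := by
    have := hfz z hz
    rwa [div_eq_mul_one_div] at this
  exact key_alg K K' R _ _ _ hK hK' hR (norm_nonneg _) (norm_nonneg _)
    ht1 haRt (hqc z hz)
end

section
/- Beardon-type lemma: let φ be subharmonic on the unit disk, and suppose A(r) := sup_{θ∈[0,2π]} ∫₀^r φ(ρe^{iθ}) dρ ≤ 1 for all r ∈ [0,1). Then A(r) ≤ r for all r ∈ [0,1). -/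
open Metric Complex MeasureTheory intervalIntegral Set Real

lemma circle_pt_mem {z : ℂ} {ρ : ℝ} (hρ : 0 ≤ ρ) (θ : ℝ) :
    z + ρ * Complex.exp (θ * Complex.I) ∈ closedBall z ρ := by
  simp only [mem_closedBall, Complex.dist_eq, add_sub_cancel_left]
  rw [norm_mul, Complex.norm_exp_ofReal_mul_I, mul_one, Complex.norm_real, Real.norm_eq_abs, _root_.abs_of_nonneg hρ]

lemma subMean_maxPrinciple (g : ℂ → ℝ) (hg : Continuous g) {s : ℝ} (hs : 0 < s)
    (hsm : ∀ z ∈ ball (0:ℂ) s, ∀ ρ : ℝ, 0 < ρ → closedBall z ρ ⊆ ball (0:ℂ) s →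
      g z ≤ (1 / (2 * Real.pi)) *
        ∫ θ in (0:ℝ)..(2 * Real.pi), g (z + ρ * Complex.exp (θ * Complex.I)))
    {c : ℝ} (hc : ∀ w ∈ sphere (0:ℂ) s, g w ≤ c) :
    ∀ z ∈ closedBall (0:ℂ) s, g z ≤ c := by
  obtain ⟨z₀, hz₀K, hmax⟩ := (isCompact_closedBall (0:ℂ) s).exists_isMaxOn
      (Metric.nonempty_closedBall.2 hs.le) hg.continuousOn
  set M := g z₀ with hM
  suffices hMc : M ≤ c by intro z hz; exact (hmax hz).trans hMc
  rcases eq_or_lt_of_le (mem_closedBall.1 hz₀K) with hb | hint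
  · exact hc z₀ (by simpa [mem_sphere] using hb)
  · -- z₀ is interior
    set u := ball (0:ℂ) s ∩ {z | g z = M} with hu_def
    set v := {z : ℂ | g z < M} with hv_def
    have hu : IsOpen u := by
      rw [Metric.isOpen_iff]
      rintro z ⟨hzball, hzM⟩
      obtain ⟨ε, hε, hball⟩ := Metric.isOpen_iff.1 Metric.isOpen_ball z hzball
      refine ⟨ε / 2, half_pos hε, fun w hw => ?_⟩
      have hwball : w ∈ ball (0:ℂ) s := hball (ball_subset_ball (half_le_self hε.le) hw)
      refine ⟨hwball, ?_⟩
      rcases eq_or_ne w z with rfl | hwz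
      · exact hzM
      set ρ' := dist w z with hρ'
      have hρ'pos : 0 < ρ' := dist_pos.2 hwz
      have hρ'lt : ρ' < ε := lt_of_lt_of_le (mem_ball.1 hw) (half_le_self hε.le)
      have hcb : closedBall z ρ' ⊆ ball (0:ℂ) s := fun x hx =>
        hball (mem_ball.2 (lt_of_le_of_lt (mem_closedBall.1 hx) hρ'lt))
      have hle := hsm z hzball ρ' hρ'pos hcb
      have hcirc : ∀ θ : ℝ, g (z + ρ' * Complex.exp (θ * Complex.I)) ≤ M := fun θ =>
        hmax (ball_subset_closedBall (hcb (circle_pt_mem hρ'pos.le θ)))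
      by_contra hne
      have hwlt : g w < M :=
        lt_of_le_of_ne (hmax (ball_subset_closedBall hwball)) hne
      -- find θ₁ ∈ [0, 2π] with z + ρ' e^{iθ₁} = w
      have hθex : ∃ θc ∈ Set.Icc (0:ℝ) (2 * π),
          g (z + ρ' * Complex.exp (θc * Complex.I)) < M := by
        have habs : ‖w - z‖ = ρ' := by rw [hρ', Complex.dist_eq]
        have hwz' : (ρ' : ℂ) * Complex.exp ((Complex.arg (w - z) : ℂ) * Complex.I) = w - z := by
          rw [← habs]; exact Complex.norm_mul_exp_arg_mul_I (w - z)
        set θ₀ := Complex.arg (w - z) with hθ₀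
        have hθ₀lb := Complex.neg_pi_lt_arg (w - z)
        have hθ₀ub := Complex.arg_le_pi (w - z)
        have hπ : (0:ℝ) < π := Real.pi_pos
        rcases le_or_gt 0 θ₀ with h0 | h0
        · refine ⟨θ₀, ⟨h0, by linarith⟩, ?_⟩
          have : z + ρ' * Complex.exp ((θ₀:ℂ) * Complex.I) = w := by
            rw [hwz']; ring
          rw [this]; exact hwlt
        · refine ⟨θ₀ + 2 * π, ⟨by linarith, by linarith⟩, ?_⟩
          have hexp : Complex.exp (((θ₀ + 2 * π : ℝ) : ℂ) * Complex.I)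
              = Complex.exp ((θ₀ : ℂ) * Complex.I) := by
            push_cast
            rw [add_mul, Complex.exp_add, Complex.exp_two_pi_mul_I, mul_one]
          have : z + (ρ' : ℂ) * Complex.exp (((θ₀ + 2 * π : ℝ) : ℂ) * Complex.I) = w := by
            rw [hexp, hwz']; ring
          rw [this]; exact hwlt
      have hcont2 : ContinuousOn (fun θ : ℝ => g (z + ρ' * Complex.exp (θ * Complex.I)))
          (Set.Icc 0 (2 * π)) := by
        apply Continuous.continuousOn; fun_prop
      have hstrict := intervalIntegral.integral_lt_integral_of_continuousOn_of_le_of_exists_lt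
        (by positivity : (0:ℝ) < 2 * π) hcont2 continuousOn_const
        (fun x _ => hcirc x) hθex
      rw [intervalIntegral.integral_const, smul_eq_mul, sub_zero] at hstrict
      have h2π : (0:ℝ) < 1 / (2 * π) := by positivity
      have : g z < (1 / (2 * π)) * (2 * π * M) :=
        lt_of_le_of_lt hle (by exact mul_lt_mul_of_pos_left hstrict h2π)
      rw [show g z = M from hzM] at this
      have hπne : (2 * π) ≠ 0 := by positivity
      rw [one_div, inv_mul_cancel_left₀ hπne] at this
      exact lt_irrefl M this
    have hv : IsOpen v := isOpen_lt hg continuous_const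
    have hdisj : Disjoint u v := by
      rw [Set.disjoint_left]
      rintro z ⟨_, hz2⟩ hz3
      have h2 : g z = M := hz2
      have h3 : g z < M := hz3
      rw [h2] at h3
      exact lt_irrefl M h3
    have hcover : ball (0:ℂ) s ⊆ u ∪ v := by
      intro z hz
      rcases eq_or_lt_of_le (show g z ≤ M from hmax (ball_subset_closedBall hz)) with h | h
      · exact Or.inl ⟨hz, h⟩
      · exact Or.inr h
    rcases (convex_ball (0:ℂ) s).isPreconnected.subset_or_subset hu hv hdisj hcover with h | h
    · -- g = M on ball, extend to sphere point (s:ℂ)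
      have hclosed : IsClosed {z : ℂ | g z = M} := isClosed_eq hg continuous_const
      have hsub2 : closure (ball (0:ℂ) s) ⊆ {z : ℂ | g z = M} :=
        closure_minimal (fun z hz => (h hz).2) hclosed
      have hsphmem : ((s:ℝ) : ℂ) ∈ closure (ball (0:ℂ) s) := by
        rw [closure_ball _ hs.ne']
        simp [Complex.norm_real, abs_of_pos hs]
      have hgs : g ((s:ℝ) : ℂ) = M := hsub2 hsphmem
      have : ((s:ℝ):ℂ) ∈ sphere (0:ℂ) s := by
        simp [Complex.dist_eq, Complex.norm_real, abs_of_pos hs]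
      rw [← hgs]
      exact hc _ this
    · exact absurd (h (mem_ball_zero_iff.2 (by simpa [Complex.dist_eq] using hint)))
        (lt_irrefl M)


lemma norm_real_mul_exp (x t : ℝ) :
    ‖((x : ℝ) : ℂ) * Complex.exp ((t : ℂ) * Complex.I)‖ = |x| := by
  rw [norm_mul, Complex.norm_exp_ofReal_mul_I, mul_one, Complex.norm_real,
    Real.norm_eq_abs]

lemma swap_helper (G : ℝ → ℝ → ℝ) (hG : Continuous fun p : ℝ × ℝ => G p.1 p.2)
    {a b : ℝ} (ha : 0 ≤ a) (hb : 0 ≤ b) :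
    ∫ x in (0:ℝ)..a, ∫ y in (0:ℝ)..b, G x y = ∫ y in (0:ℝ)..b, ∫ x in (0:ℝ)..a, G x y := by
  rw [intervalIntegral.integral_of_le ha, intervalIntegral.integral_of_le hb]
  simp_rw [intervalIntegral.integral_of_le ha, intervalIntegral.integral_of_le hb]
  apply MeasureTheory.integral_integral_swap
  rw [Measure.prod_restrict]
  have hint : IntegrableOn (fun p : ℝ × ℝ => G p.1 p.2) (Icc 0 a ×ˢ Icc 0 b) volume :=
    hG.continuousOn.integrableOn_compact (isCompact_Icc.prod isCompact_Icc)
  rw [Measure.volume_eq_prod] at hint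
  exact hint.mono_set (Set.prod_mono Set.Ioc_subset_Icc_self Set.Ioc_subset_Icc_self)

/-- Beardon-type lemma: if φ is subharmonic (continuous with the sub-mean-value
    property) on 𝔻 and A(r) = sup_θ ∫₀^r φ(ρe^{iθ}) dρ ≤ 1 for all r ∈ [0,1),
    then A(r) ≤ r. -/
theorem beardon_radial (φ : ℂ → ℝ)
    (hcont : ContinuousOn φ (Metric.ball 0 1))
    (hsub : ∀ z ∈ Metric.ball (0:ℂ) 1, ∀ ρ : ℝ, 0 < ρ →
      Metric.closedBall z ρ ⊆ Metric.ball (0:ℂ) 1 →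
      φ z ≤ (1 / (2 * Real.pi)) *
        ∫ θ in (0:ℝ)..(2 * Real.pi), φ (z + ρ * Complex.exp (θ * Complex.I)))
    (hA : ∀ r ∈ Set.Ico (0:ℝ) 1, ∀ θ : ℝ,
      ∫ ρ in (0:ℝ)..r, φ (ρ * Complex.exp (θ * Complex.I)) ≤ 1) :
    ∀ r ∈ Set.Ico (0:ℝ) 1, ∀ θ : ℝ,
      ∫ ρ in (0:ℝ)..r, φ (ρ * Complex.exp (θ * Complex.I)) ≤ r := by
  intro r hr θ
  obtain ⟨hr0, hr1⟩ := hr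
  rcases eq_or_lt_of_le hr0 with h0 | hrpos
  · rw [← h0]; simp
  suffices key : ∀ s ∈ Set.Ioo r 1,
      (∫ ρ in (0:ℝ)..r, φ (ρ * Complex.exp (θ * Complex.I))) ≤ r / s by
    set F := ∫ ρ in (0:ℝ)..r, φ (↑ρ * Complex.exp (↑θ * Complex.I)) with hF
    by_contra hcon
    push_neg at hcon
    have hFpos : 0 < F := hrpos.trans hcon
    have hF1 : F ≤ 1 := hA r ⟨hr0, hr1⟩ θ
    have h1 : r / F < 1 := (div_lt_one hFpos).2 hcon
    have h2 : r ≤ r / F := by rw [le_div_iff₀ hFpos]; nlinarith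
    set s := (r / F + 1) / 2 with hs
    have hsIoo : s ∈ Set.Ioo r 1 := ⟨by simp only [hs]; nlinarith, by simp only [hs]; nlinarith⟩
    have hks := key s hsIoo
    have hlt : r / s < F := by
      rw [div_lt_iff₀ (hrpos.trans hsIoo.1)]
      have h3 : r / F < s := by simp only [hs]; nlinarith
      have h4 := (div_lt_iff₀ hFpos).1 h3
      linarith [h4, mul_comm s F]
    linarith
  intro s hsmem
  obtain ⟨hrs, hs1⟩ := hsmem
  have hs0 : 0 < s := hrpos.trans hrs
  -- Tietze extension of φ from closedBall 0 s
  have hsub1 : closedBall (0:ℂ) s ⊆ ball (0:ℂ) 1 := closedBall_subset_ball hs1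
  have hφc : Continuous ((closedBall (0:ℂ) s).restrict φ) := (hcont.mono hsub1).restrict
  obtain ⟨Ψ, hΨ⟩ := ContinuousMap.exists_restrict_eq (Y := ℝ)
    (Metric.isClosed_closedBall (x := (0:ℂ)) (ε := s)) ⟨_, hφc⟩
  set ψ : ℂ → ℝ := fun z => Ψ z with hψ
  have hψcont : Continuous ψ := Ψ.continuous
  have hψeq : ∀ x ∈ closedBall (0:ℂ) s, ψ x = φ x := by
    intro x hx
    have := DFunLike.congr_fun hΨ ⟨x, hx⟩
    exact this
  -- the averaged function g
  set g : ℂ → ℝ := fun z => ∫ t in (0:ℝ)..1, ψ ((t : ℂ) * z) with hg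
  have hgcont : Continuous g := by
    apply intervalIntegral.continuous_parametric_intervalIntegral_of_continuous'
      (f := fun (z : ℂ) (t : ℝ) => ψ ((t:ℂ) * z)) (μ := volume)
    apply hψcont.comp
    exact (Complex.continuous_ofReal.comp continuous_snd).mul continuous_fst
  -- sub-mean-value property of g
  have hgsub : ∀ z ∈ ball (0:ℂ) s, ∀ ρ : ℝ, 0 < ρ → closedBall z ρ ⊆ ball (0:ℂ) s →
      g z ≤ (1 / (2 * Real.pi)) *
        ∫ θ' in (0:ℝ)..(2 * Real.pi), g (z + ρ * Complex.exp (θ' * Complex.I)) := by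
    intro z hz ρ hρ hcb
    have hzs : ‖z‖ < s := mem_ball_zero_iff.1 hz
    have hzρ : ‖z‖ + ρ < s := by
      have hzrep : ((‖z‖ : ℝ) : ℂ) * Complex.exp ((Complex.arg z : ℂ) * Complex.I) = z := by
        exact Complex.norm_mul_exp_arg_mul_I z
      have hmem : ((‖z‖ + ρ : ℝ) : ℂ) * Complex.exp ((Complex.arg z : ℂ) * Complex.I)
          ∈ closedBall z ρ := by
        rw [mem_closedBall, dist_eq_norm]
        have : ((‖z‖ + ρ : ℝ) : ℂ) * Complex.exp ((Complex.arg z : ℂ) * Complex.I) - z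
            = (ρ : ℂ) * Complex.exp ((Complex.arg z : ℂ) * Complex.I) := by
          rw [Complex.ofReal_add, add_mul, hzrep]; ring
        rw [this]
        rw [show ((ρ:ℝ):ℂ) * Complex.exp ((Complex.arg z : ℂ) * Complex.I)
          = ((ρ:ℝ):ℂ) * Complex.exp (((Complex.arg z : ℝ) : ℂ) * Complex.I) from rfl]
        rw [norm_real_mul_exp, _root_.abs_of_nonneg hρ.le]
      have h1 := mem_ball_zero_iff.1 (hcb hmem)
      rw [norm_real_mul_exp, _root_.abs_of_nonneg (by positivity)] at h1
      exact h1
    have hpt : ∀ t ∈ Icc (0:ℝ) 1, ∀ θ' : ℝ,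
        ‖(t:ℂ) * z + ((t * ρ : ℝ) : ℂ) * Complex.exp ((θ':ℂ) * Complex.I)‖ ≤ ‖z‖ + ρ := by
      intro t ht θ'
      calc ‖(t:ℂ) * z + ((t * ρ : ℝ) : ℂ) * Complex.exp ((θ':ℂ) * Complex.I)‖
          ≤ ‖(t:ℂ) * z‖ + ‖((t * ρ : ℝ) : ℂ) * Complex.exp ((θ':ℂ) * Complex.I)‖ :=
            norm_add_le _ _
        _ = t * ‖z‖ + t * ρ := by
            rw [norm_mul, Complex.norm_real, Real.norm_eq_abs, norm_real_mul_exp,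
              _root_.abs_of_nonneg ht.1, _root_.abs_of_nonneg (mul_nonneg ht.1 hρ.le)]
        _ ≤ 1 * ‖z‖ + 1 * ρ := by
            have := ht.2
            have hz0 : (0:ℝ) ≤ ‖z‖ := norm_nonneg z
            nlinarith
        _ = ‖z‖ + ρ := by ring
    have claim1 : ∀ t ∈ Icc (0:ℝ) 1,
        ψ ((t:ℂ) * z) ≤ (1 / (2 * Real.pi)) * ∫ θ' in (0:ℝ)..(2 * Real.pi),
          ψ ((t:ℂ) * z + ((t * ρ : ℝ) : ℂ) * Complex.exp ((θ':ℂ) * Complex.I)) := by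
      intro t ht
      rcases eq_or_lt_of_le ht.1 with h0 | htpos
      · rw [← h0]
        simp only [Complex.ofReal_zero, zero_mul, Complex.ofReal_mul, add_zero, zero_add,
          intervalIntegral.integral_const, smul_eq_mul, sub_zero]
        have hπ : (2 * Real.pi) ≠ 0 := by positivity
        rw [one_div, inv_mul_cancel_left₀ hπ]
      · have htz : (t:ℂ) * z ∈ ball (0:ℂ) 1 := by
          rw [mem_ball_zero_iff, norm_mul, Complex.norm_real, Real.norm_eq_abs,
            _root_.abs_of_nonneg ht.1]
          nlinarith [norm_nonneg z, ht.2]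
        have hincl : closedBall ((t:ℂ) * z) (t * ρ) ⊆ ball (0:ℂ) 1 := by
          intro u hu
          rw [mem_closedBall, dist_eq_norm] at hu
          rw [mem_ball_zero_iff]
          have h1 : ‖u‖ ≤ ‖u - (t:ℂ) * z‖ + ‖(t:ℂ) * z‖ := by
            simpa using norm_add_le (u - (t:ℂ) * z) ((t:ℂ) * z)
          have h2 : ‖(t:ℂ) * z‖ = t * ‖z‖ := by
            rw [norm_mul, Complex.norm_real, Real.norm_eq_abs, _root_.abs_of_nonneg ht.1]
          nlinarith [norm_nonneg z, ht.2, norm_nonneg (u - (t:ℂ)*z)]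
        have h1 := hsub ((t:ℂ) * z) htz (t * ρ) (by positivity) hincl
        have e1 : ψ ((t:ℂ) * z) = φ ((t:ℂ) * z) := by
          apply hψeq
          rw [mem_closedBall_zero_iff, norm_mul, Complex.norm_real, Real.norm_eq_abs,
            _root_.abs_of_nonneg ht.1]
          nlinarith [norm_nonneg z, ht.2]
        have e2 : (∫ θ' in (0:ℝ)..(2 * Real.pi),
              ψ ((t:ℂ) * z + ((t * ρ : ℝ) : ℂ) * Complex.exp ((θ':ℂ) * Complex.I)))
            = ∫ θ' in (0:ℝ)..(2 * Real.pi),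
              φ ((t:ℂ) * z + ((t * ρ : ℝ) : ℂ) * Complex.exp ((θ':ℂ) * Complex.I)) := by
          apply intervalIntegral.integral_congr
          intro θ' _
          show ψ _ = φ _
          exact hψeq _ (mem_closedBall_zero_iff.2 ((hpt t ht θ').trans hzρ.le))
        rw [e1, e2]
        exact h1
    have hC1 : Continuous fun t : ℝ => ψ ((t:ℂ) * z) := by
      apply hψcont.comp
      exact (Complex.continuous_ofReal).mul continuous_const
    have hCin : Continuous fun p : ℝ × ℝ =>
        ψ ((p.1:ℂ) * z + ((p.1 * ρ : ℝ) : ℂ) * Complex.exp ((p.2:ℂ) * Complex.I)) := by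
      apply hψcont.comp
      apply Continuous.add
      · exact (Complex.continuous_ofReal.comp continuous_fst).mul continuous_const
      · exact ((Complex.continuous_ofReal.comp (continuous_fst.mul continuous_const))).mul
          (Complex.continuous_exp.comp
            ((Complex.continuous_ofReal.comp continuous_snd).mul continuous_const))
    have hC2 : Continuous fun t : ℝ => (1 / (2 * Real.pi)) * ∫ θ' in (0:ℝ)..(2 * Real.pi),
        ψ ((t:ℂ) * z + ((t * ρ : ℝ) : ℂ) * Complex.exp ((θ':ℂ) * Complex.I)) := by
      apply continuous_const.mul
      exact intervalIntegral.continuous_parametric_intervalIntegral_of_continuous'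
        (f := fun (t : ℝ) (θ' : ℝ) =>
          ψ ((t:ℂ) * z + ((t * ρ : ℝ) : ℂ) * Complex.exp ((θ':ℂ) * Complex.I)))
        (μ := volume) hCin 0 (2 * Real.pi)
    have hmono := intervalIntegral.integral_mono_on zero_le_one
      (hC1.intervalIntegrable (μ := MeasureTheory.volume) 0 1) (hC2.intervalIntegrable (μ := MeasureTheory.volume) 0 1) claim1
    rw [intervalIntegral.integral_const_mul] at hmono
    have hswap : (∫ t in (0:ℝ)..1, ∫ θ' in (0:ℝ)..(2 * Real.pi),
          ψ ((t:ℂ) * z + ((t * ρ : ℝ) : ℂ) * Complex.exp ((θ':ℂ) * Complex.I)))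
        = ∫ θ' in (0:ℝ)..(2 * Real.pi), ∫ t in (0:ℝ)..1,
          ψ ((t:ℂ) * z + ((t * ρ : ℝ) : ℂ) * Complex.exp ((θ':ℂ) * Complex.I)) :=
      swap_helper _ hCin zero_le_one (by positivity)
    rw [hswap] at hmono
    have hinner : (∫ θ' in (0:ℝ)..(2 * Real.pi), ∫ t in (0:ℝ)..1,
          ψ ((t:ℂ) * z + ((t * ρ : ℝ) : ℂ) * Complex.exp ((θ':ℂ) * Complex.I)))
        = ∫ θ' in (0:ℝ)..(2 * Real.pi), g (z + ρ * Complex.exp ((θ':ℂ) * Complex.I)) := by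
      apply intervalIntegral.integral_congr
      intro θ' _
      apply intervalIntegral.integral_congr
      intro t _
      show ψ _ = ψ _
      congr 1
      push_cast
      ring
    rw [hinner] at hmono
    exact hmono
  -- boundary bound
  have hbd : ∀ w ∈ sphere (0:ℂ) s, g w ≤ 1 / s := by
    intro w hw
    have habs : ‖w‖ = s := by
      rw [mem_sphere, Complex.dist_eq, sub_zero] at hw
      exact hw
    have hwrep : ((s:ℝ) : ℂ) * Complex.exp ((Complex.arg w : ℂ) * Complex.I) = w := by
      rw [← habs]; exact Complex.norm_mul_exp_arg_mul_I w
    have e1 : g w = ∫ t in (0:ℝ)..1,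
        φ (((t * s : ℝ) : ℂ) * Complex.exp ((Complex.arg w : ℂ) * Complex.I)) := by
      apply intervalIntegral.integral_congr
      intro t ht
      rw [Set.uIcc_of_le zero_le_one] at ht
      have h1 : (t:ℂ) * w = ((t * s : ℝ) : ℂ) * Complex.exp ((Complex.arg w : ℂ) * Complex.I) := by
        push_cast
        rw [mul_assoc, hwrep]
      have hmem : (t:ℂ) * w ∈ closedBall (0:ℂ) s := by
        rw [mem_closedBall_zero_iff, norm_mul, Complex.norm_real, Real.norm_eq_abs,
          _root_.abs_of_nonneg ht.1, habs]
        nlinarith [ht.2, hs0.le]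
      show ψ ((t:ℂ) * w) = φ (((t * s : ℝ) : ℂ) * Complex.exp ((Complex.arg w : ℂ) * Complex.I))
      rw [hψeq _ hmem, h1]
    rw [e1]
    have e2 := intervalIntegral.integral_comp_mul_right
      (fun ρ' : ℝ => φ ((ρ' : ℂ) * Complex.exp ((Complex.arg w : ℂ) * Complex.I)))
      (a := 0) (b := 1) hs0.ne'
    simp only [zero_mul, one_mul] at e2
    rw [e2, smul_eq_mul, one_div]
    have hAs := hA s ⟨hs0.le, hs1⟩ (Complex.arg w)
    exact mul_le_of_le_one_right (inv_nonneg.2 hs0.le) hAs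
  -- apply maximum principle
  have hmaxp := subMean_maxPrinciple g hgcont hs0 hgsub hbd
  have hmemr : (r : ℂ) * Complex.exp ((θ:ℂ) * Complex.I) ∈ closedBall (0:ℂ) s := by
    rw [mem_closedBall_zero_iff, norm_real_mul_exp, _root_.abs_of_nonneg hr0]
    exact hrs.le
  have hgr := hmaxp _ hmemr
  -- rewrite the goal integral as r * g(...)
  have e3 : g ((r:ℂ) * Complex.exp ((θ:ℂ) * Complex.I))
      = ∫ t in (0:ℝ)..1, φ (((t * r : ℝ) : ℂ) * Complex.exp ((θ:ℂ) * Complex.I)) := by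
    apply intervalIntegral.integral_congr
    intro t ht
    rw [Set.uIcc_of_le zero_le_one] at ht
    have hmem : (t:ℂ) * ((r:ℂ) * Complex.exp ((θ:ℂ) * Complex.I)) ∈ closedBall (0:ℂ) s := by
      rw [mem_closedBall_zero_iff, norm_mul, Complex.norm_real, Real.norm_eq_abs,
        _root_.abs_of_nonneg ht.1]
      have : ‖(r:ℂ) * Complex.exp ((θ:ℂ) * Complex.I)‖ ≤ s := mem_closedBall_zero_iff.1 hmemr
      nlinarith [ht.2, norm_nonneg ((r:ℂ) * Complex.exp ((θ:ℂ) * Complex.I))]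
    show ψ ((t:ℂ) * ((r:ℂ) * Complex.exp ((θ:ℂ) * Complex.I)))
        = φ (((t * r : ℝ) : ℂ) * Complex.exp ((θ:ℂ) * Complex.I))
    rw [hψeq _ hmem]
    congr 1
    push_cast
    ring
  have e4 := intervalIntegral.integral_comp_mul_right
    (fun ρ' : ℝ => φ ((ρ' : ℂ) * Complex.exp ((θ:ℂ) * Complex.I)))
    (a := 0) (b := 1) hrpos.ne'
  simp only [zero_mul, one_mul] at e4
  rw [e3, e4, smul_eq_mul] at hgr
  -- hgr : r⁻¹ * ∫ ... ≤ 1/s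
  rw [div_eq_mul_inv, ← one_div]
  calc (∫ ρ in (0:ℝ)..r, φ (↑ρ * Complex.exp (↑θ * Complex.I)))
      = r * (r⁻¹ * ∫ ρ in (0:ℝ)..r, φ (↑ρ * Complex.exp (↑θ * Complex.I))) := by
        rw [mul_inv_cancel_left₀ hrpos.ne']
    _ ≤ r * (1 / s) := mul_le_mul_of_nonneg_left hgr hr0
end

section
/- Let ω be a majorant, α ∈ [0,1], and C₅ > 0. Suppose f ∈ C¹(𝔻) satisfies ‖D_f(z)‖ ≤ C₅/ω((1−|z|)^{1−α}) for all z ∈ 𝔻. Then for all z₁ ≠ z₂ in 𝔻, |f(z₁) − f(z₂)| ≤ (Γ((1+α)/2)²/Γ(1+α)) · C₅ |z₁ − z₂| / ω(((1−|z₁|)(1−|z₂|))^{(1−α)/2}). -/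
open Complex Metric Set

lemma real_beta_integrable {c : ℝ} (hc : 0 < c) :
    IntervalIntegrable (fun t : ℝ => t ^ (c - 1) * (1 - t) ^ (c - 1)) MeasureTheory.volume 0 1 := by
  have h := Complex.betaIntegral_convergent (u := (c:ℂ)) (v := (c:ℂ)) (by simpa) (by simpa)
  rw [intervalIntegrable_iff_integrableOn_Ioc_of_le (by norm_num)] at h ⊢
  have heq : ∀ x ∈ Set.Ioc (0:ℝ) 1,
      (x:ℂ) ^ ((c:ℂ) - 1) * (1 - (x:ℂ)) ^ ((c:ℂ) - 1)
        = ((x ^ (c - 1) * (1 - x) ^ (c - 1) : ℝ) : ℂ) := by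
    intro x hx
    rw [Complex.ofReal_mul, Complex.ofReal_cpow hx.1.le, Complex.ofReal_cpow (by linarith [hx.2])]
    push_cast
    ring
  have h2 : MeasureTheory.IntegrableOn (fun x : ℝ => ((x ^ (c - 1) * (1 - x) ^ (c - 1) : ℝ) : ℂ))
      (Set.Ioc (0:ℝ) 1) MeasureTheory.volume := h.congr_fun heq measurableSet_Ioc
  have := h2.re
  simpa [MeasureTheory.IntegrableOn] using this

lemma real_beta_value {c : ℝ} (hc : 0 < c) :
    ∫ t in (0:ℝ)..1, t ^ (c - 1) * (1 - t) ^ (c - 1)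
      = Real.Gamma c ^ 2 / Real.Gamma (2 * c) := by
  have h := Complex.Gamma_mul_Gamma_eq_betaIntegral (s := (c:ℂ)) (t := (c:ℂ)) (by simpa) (by simpa)
  have heq : Complex.betaIntegral c c
      = ((∫ t in (0:ℝ)..1, t ^ (c - 1) * (1 - t) ^ (c - 1) : ℝ) : ℂ) := by
    rw [Complex.betaIntegral, ← intervalIntegral.integral_ofReal]
    apply intervalIntegral.integral_congr
    intro x hx
    rw [Set.uIcc_of_le (by norm_num : (0:ℝ) ≤ 1)] at hx
    simp only []
    rw [Complex.ofReal_mul, Complex.ofReal_cpow hx.1, Complex.ofReal_cpow (by linarith [hx.2])]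
    push_cast
    ring
  rw [heq, ← Complex.ofReal_add, Complex.Gamma_ofReal, Complex.Gamma_ofReal] at h
  have h2c : (0:ℝ) < 2 * c := by linarith
  have hne : Real.Gamma (2 * c) ≠ 0 := (Real.Gamma_pos_of_pos h2c).ne'
  have : Real.Gamma c * Real.Gamma c
      = Real.Gamma (c + c) * ∫ t in (0:ℝ)..1, t ^ (c - 1) * (1 - t) ^ (c - 1) := by
    exact_mod_cast h
  rw [show c + c = 2 * c by ring] at this
  field_simp [pow_two]
  rw [mul_comm c 2]
  linarith [this]

lemma clm_aux (a b : ℂ) (x y : ℝ) :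
    (x : ℂ) * a + (y : ℂ) * b
      = (a - I * b) / 2 * ((x : ℂ) + (y : ℂ) * I) + (a + I * b) / 2 * ((x : ℂ) - (y : ℂ) * I) := by
  linear_combination ((y : ℂ) * b) * Complex.I_mul_I

lemma clm_repr (D : ℂ →L[ℝ] ℂ) (v : ℂ) :
    D v = (D 1 - I * D I) / 2 * v + (D 1 + I * D I) / 2 * ((starRingEnd ℂ) v) := by
  have hv : v = v.re • (1 : ℂ) + v.im • Complex.I := by
    simp [Complex.real_smul, Complex.re_add_im]
  have hc : (starRingEnd ℂ) v = (v.re : ℂ) - (v.im : ℂ) * I := by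
    apply Complex.ext <;> simp
  conv_lhs => rw [hv]
  rw [map_add, map_smul, map_smul]
  simp only [Complex.real_smul]
  rw [clm_aux (D 1) (D I) v.re v.im, Complex.re_add_im, ← hc]

lemma clm_bound (D : ℂ →L[ℝ] ℂ) (v : ℂ) :
    ‖D v‖ ≤ (‖(D 1 - I * D I) / 2‖ + ‖(D 1 + I * D I) / 2‖) * ‖v‖ := by
  rw [clm_repr D v]
  calc ‖(D 1 - I * D I) / 2 * v + (D 1 + I * D I) / 2 * ((starRingEnd ℂ) v)‖
      ≤ ‖(D 1 - I * D I) / 2 * v‖ + ‖(D 1 + I * D I) / 2 * ((starRingEnd ℂ) v)‖ :=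
        norm_add_le _ _
    _ = (‖(D 1 - I * D I) / 2‖ + ‖(D 1 + I * D I) / 2‖) * ‖v‖ := by
        simp only [norm_mul, Complex.norm_conj]
        ring

set_option maxHeartbeats 1000000 in
/-- Upper Lipschitz-type bound: if ‖D_f(z)‖ ≤ C₅/ω((1−|z|)^{1−α}) on 𝔻 for a
    majorant ω, then |f(z₁) − f(z₂)| ≤ (Γ((1+α)/2)²/Γ(1+α)) C₅ |z₁−z₂| /
    ω(((1−|z₁|)(1−|z₂|))^{(1−α)/2}). -/
theorem upper_modulus_bound (ω : ℝ → ℝ)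
    (hcont : ContinuousOn ω (Set.Ici 0))
    (hmono : MonotoneOn ω (Set.Ici 0))
    (h0 : ω 0 = 0)
    (hdec : AntitoneOn (fun t => ω t / t) (Set.Ioi 0))
    (α : ℝ) (hα : α ∈ Set.Icc (0:ℝ) 1) (C₅ : ℝ) (hC₅ : 0 < C₅)
    (f : ℂ → ℂ) (hreg : ContDiffOn ℝ 1 f (Metric.ball 0 1))
    (hbound : ∀ z ∈ Metric.ball (0:ℂ) 1,
      ‖wdz f z‖ + ‖wdzbar f z‖
        ≤ C₅ / ω ((1 - ‖z‖) ^ (1 - α))) :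
    ∀ z₁ ∈ Metric.ball (0:ℂ) 1, ∀ z₂ ∈ Metric.ball (0:ℂ) 1,
      ‖f z₁ - f z₂‖
        ≤ (Real.Gamma ((1 + α) / 2) ^ 2 / Real.Gamma (1 + α)) * C₅
            * ‖z₁ - z₂‖
            / ω (((1 - ‖z₁‖) * (1 - ‖z₂‖)) ^ ((1 - α) / 2)) := by
  obtain ⟨hα0, hα1⟩ := hα
  intro z₁ hz₁ z₂ hz₂
  rw [mem_ball_zero_iff] at hz₁ hz₂
  have hd₁ : 0 < 1 - ‖z₁‖ := by linarith
  have hd₂ : 0 < 1 - ‖z₂‖ := by linarith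
  set s₀ : ℝ := ((1 - ‖z₁‖) * (1 - ‖z₂‖)) ^ ((1 - α) / 2) with hs₀def
  have hs₀ : 0 < s₀ := Real.rpow_pos_of_pos (mul_pos hd₁ hd₂) _
  have hωnonneg : ∀ t, 0 ≤ t → 0 ≤ ω t := fun t ht => by
    rw [← h0]; exact hmono (le_refl (0:ℝ)) ht ht
  have hdiffOn : DifferentiableOn ℝ f (Metric.ball 0 1) := hreg.differentiableOn one_ne_zero
  by_cases hωs : ω s₀ = 0
  · -- degenerate case: ω vanishes identically, so f is constant
    have hzero : ∀ u : ℝ, 0 < u → ω u = 0 := by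
      intro u hu
      rcases le_or_gt u s₀ with h | h
      · exact le_antisymm (hωs ▸ hmono hu.le hs₀.le h) (hωnonneg u hu.le)
      · have h2 := hdec (Set.mem_Ioi.2 hs₀) (Set.mem_Ioi.2 (hs₀.trans h)) h.le
        simp only [] at h2
        rw [hωs, zero_div] at h2
        have : ω u ≤ 0 := by
          have := (div_le_iff₀ (hs₀.trans h)).1 h2
          linarith
        exact le_antisymm this (hωnonneg u (hs₀.trans h).le)
    have hDzero : ∀ z ∈ Metric.ball (0:ℂ) 1, ‖fderiv ℝ f z‖ ≤ 0 := by
      intro z hz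
      have hb := hbound z hz
      have hz' : ‖z‖ < 1 := by
        exact mem_ball_zero_iff.1 hz
      have hpos : (0:ℝ) < (1 - ‖z‖) ^ (1 - α) :=
        Real.rpow_pos_of_pos (by linarith) _
      rw [hzero _ hpos, div_zero] at hb
      have h1 : ‖wdz f z‖ = 0 := by
        have := norm_nonneg (wdz f z)
        have := norm_nonneg (wdzbar f z)
        linarith
      have h2 : ‖wdzbar f z‖ = 0 := by
        have := norm_nonneg (wdz f z)
        have := norm_nonneg (wdzbar f z)
        linarith
      apply ContinuousLinearMap.opNorm_le_bound _ le_rfl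
      intro v
      have := clm_bound (fderiv ℝ f z) v
      rw [show (fderiv ℝ f z 1 - I * fderiv ℝ f z I) / 2 = wdz f z from rfl,
        show (fderiv ℝ f z 1 + I * fderiv ℝ f z I) / 2 = wdzbar f z from rfl, h1, h2] at this
      simpa using this
    have hconst : ‖f z₁ - f z₂‖ ≤ 0 * ‖z₁ - z₂‖ := by
      apply (convex_ball (0:ℂ) 1).norm_image_sub_le_of_norm_fderiv_le
        (fun x hx => (hdiffOn x hx).differentiableAt (isOpen_ball.mem_nhds hx))
        hDzero (mem_ball_zero_iff.2 hz₂) (mem_ball_zero_iff.2 hz₁)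
    rw [hωs, div_zero]
    simp only [zero_mul] at hconst
    linarith [norm_nonneg (f z₁ - f z₂)]
  · -- main case: ω s₀ > 0
    have hωpos : 0 < ω s₀ := lt_of_le_of_ne (hωnonneg s₀ hs₀.le) (Ne.symm hωs)
    set c : ℝ := (1 + α) / 2 with hcdef
    have hc : 0 < c := by rw [hcdef]; linarith
    set χ : ℝ → ℂ := fun t => z₂ + t • (z₁ - z₂) with hχdef
    have hχ0 : χ 0 = z₂ := by simp [hχdef]
    have hχ1 : χ 1 = z₁ := by simp [hχdef]
    have hχcont : Continuous χ := by
      apply Continuous.add continuous_const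
      exact continuous_id.smul continuous_const
    have hχnorm : ∀ t ∈ Set.Icc (0:ℝ) 1, ‖χ t‖ ≤ t * ‖z₁‖ + (1 - t) * ‖z₂‖ := by
      intro t ht
      have h1 : χ t = t • z₁ + (1 - t) • z₂ := by
        rw [hχdef]; simp only [smul_sub, sub_smul, one_smul]; ring
      rw [h1]
      calc ‖t • z₁ + (1 - t) • z₂‖ ≤ ‖t • z₁‖ + ‖(1 - t) • z₂‖ := norm_add_le _ _
        _ = t * ‖z₁‖ + (1 - t) * ‖z₂‖ := by
            rw [norm_smul, norm_smul, Real.norm_of_nonneg ht.1,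
              Real.norm_of_nonneg (by linarith [ht.2])]
    have hχmem : ∀ t ∈ Set.Icc (0:ℝ) 1, χ t ∈ Metric.ball (0:ℂ) 1 := by
      intro t ht
      rw [mem_ball_zero_iff]
      have h5 := hχnorm t ht
      have h6 : 0 < t * (1 - ‖z₁‖) + (1 - t) * (1 - ‖z₂‖) := by
        rcases eq_or_lt_of_le ht.1 with h | h
        · rw [← h]; simpa using hd₂
        · have := mul_pos h hd₁
          nlinarith [mul_nonneg (by linarith [ht.2] : (0:ℝ) ≤ 1 - t) hd₂.le]
      nlinarith
    have hχmem' : ∀ t ∈ Set.uIcc (0:ℝ) 1, χ t ∈ Metric.ball (0:ℂ) 1 := by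
      rw [Set.uIcc_of_le (by norm_num : (0:ℝ) ≤ 1)]; exact hχmem
    set g' : ℝ → ℂ := fun t => (fderiv ℝ f (χ t)) (z₁ - z₂) with hg'def
    have hderiv : ∀ t ∈ Set.uIcc (0:ℝ) 1, HasDerivAt (fun t => f (χ t)) (g' t) t := by
      intro t ht
      have hmem := hχmem' t ht
      have hfd : HasFDerivAt f (fderiv ℝ f (χ t)) (χ t) :=
        ((hdiffOn (χ t) hmem).differentiableAt (isOpen_ball.mem_nhds hmem)).hasFDerivAt
      have hχd : HasDerivAt χ (z₁ - z₂) t := by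
        have : HasDerivAt (fun s : ℝ => s • (z₁ - z₂)) ((1:ℝ) • (z₁ - z₂)) t :=
          (hasDerivAt_id t).smul_const (z₁ - z₂)
        simpa [hχdef, one_smul] using this.const_add z₂
      exact hfd.comp_hasDerivAt t hχd
    have hg'cont : ContinuousOn g' (Set.uIcc (0:ℝ) 1) := by
      have h1 : ContinuousOn (fderiv ℝ f) (Metric.ball (0:ℂ) 1) :=
        hreg.continuousOn_fderiv_of_isOpen isOpen_ball le_rfl
      exact (h1.comp hχcont.continuousOn hχmem').clm_apply continuousOn_const
    have hgint : IntervalIntegrable g' MeasureTheory.volume 0 1 :=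
      hg'cont.intervalIntegrable
    have hFTC : ∫ t in (0:ℝ)..1, g' t = f z₁ - f z₂ := by
      rw [intervalIntegral.integral_eq_sub_of_hasDerivAt hderiv hgint, hχ0, hχ1]
    -- the majorant function
    set M : ℝ → ℝ := fun t => C₅ / ω s₀ * (t ^ (c - 1) * (1 - t) ^ (c - 1)) * ‖z₁ - z₂‖
      with hMdef
    have hMint : IntervalIntegrable M MeasureTheory.volume 0 1 :=
      ((real_beta_integrable hc).const_mul _).mul_const _
    -- a.e. pointwise bound
    have hae : ∀ᵐ t ∂(MeasureTheory.volume.restrict (Set.uIoc (0:ℝ) 1)), ‖g' t‖ ≤ M t := by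
      have hne1 : ∀ᵐ (t : ℝ) ∂MeasureTheory.volume, t ≠ 1 := by
        rw [MeasureTheory.ae_iff]
        have hset : {t : ℝ | ¬ t ≠ 1} = {1} := by ext t; simp
        rw [hset]
        exact MeasureTheory.measure_singleton 1
      filter_upwards [MeasureTheory.ae_restrict_mem measurableSet_uIoc,
        MeasureTheory.ae_restrict_of_ae hne1] with t htmem htne
      rw [Set.uIoc_of_le (by norm_num : (0:ℝ) ≤ 1)] at htmem
      have ht0 : 0 < t := htmem.1
      have ht1 : t < 1 := lt_of_le_of_ne htmem.2 htne
      -- geometric estimate: 1 - ‖χ t‖ ≥ √(t(1-t)(1-‖z₁‖)(1-‖z₂‖))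
      have hsq : Real.sqrt (t * (1 - t) * ((1 - ‖z₁‖) * (1 - ‖z₂‖))) ≤ 1 - ‖χ t‖ := by
        have hn := hχnorm t ⟨ht0.le, ht1.le⟩
        set a := Real.sqrt (t * (1 - ‖z₁‖)) with hadef
        set b := Real.sqrt ((1 - t) * (1 - ‖z₂‖)) with hbdef
        have ha2 : a ^ 2 = t * (1 - ‖z₁‖) := Real.sq_sqrt (by nlinarith)
        have hb2 : b ^ 2 = (1 - t) * (1 - ‖z₂‖) := Real.sq_sqrt (by nlinarith)
        have hab : a * b = Real.sqrt (t * (1 - t) * ((1 - ‖z₁‖) * (1 - ‖z₂‖))) := by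
          rw [hadef, hbdef, ← Real.sqrt_mul (by nlinarith)]
          ring_nf
        have h2ab : a * b ≤ a ^ 2 + b ^ 2 := by nlinarith [sq_nonneg (a - b)]
        nlinarith [h2ab, hab, ha2, hb2, hn]
      have hχlt : ‖χ t‖ < 1 := mem_ball_zero_iff.1 (hχmem t ⟨ht0.le, ht1.le⟩)
      set ν : ℝ := (t * (1 - t)) ^ ((1 - α) / 2) with hνdef
      have hνpos : 0 < ν := Real.rpow_pos_of_pos (by nlinarith) _
      have hν1 : ν ≤ 1 :=
        Real.rpow_le_one (by nlinarith) (by nlinarith) (by linarith)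
      -- (1 - ‖χ t‖)^(1-α) ≥ ν * s₀
      have hkey : ν * s₀ ≤ (1 - ‖χ t‖) ^ (1 - α) := by
        have e1 : ν * s₀ = (t * (1 - t) * ((1 - ‖z₁‖) * (1 - ‖z₂‖))) ^ ((1 - α) / 2) := by
          rw [hνdef, hs₀def, ← Real.mul_rpow (mul_nonneg ht0.le (by linarith))
            (mul_nonneg hd₁.le hd₂.le)]
        have e2 : (t * (1 - t) * ((1 - ‖z₁‖) * (1 - ‖z₂‖))) ^ ((1 - α) / 2)
            = (Real.sqrt (t * (1 - t) * ((1 - ‖z₁‖) * (1 - ‖z₂‖)))) ^ (1 - α) := by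
          rw [Real.sqrt_eq_rpow, ← Real.rpow_mul
            (mul_nonneg (mul_nonneg ht0.le (by linarith)) (mul_nonneg hd₁.le hd₂.le))]
          congr 1
          ring
        rw [e1, e2]
        exact Real.rpow_le_rpow (Real.sqrt_nonneg _) hsq (by linarith)
      -- ω monotonicity and quasi-homogeneity
      have hω1 : ω (ν * s₀) ≤ ω ((1 - ‖χ t‖) ^ (1 - α)) :=
        hmono (Set.mem_Ici.2 (mul_nonneg hνpos.le hs₀.le))
          (Set.mem_Ici.2 (le_trans (mul_nonneg hνpos.le hs₀.le) hkey)) hkey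
      have hω2 : ν * ω s₀ ≤ ω (ν * s₀) := by
        have hνs₀ : 0 < ν * s₀ := mul_pos hνpos hs₀
        have h2 := hdec (Set.mem_Ioi.2 hνs₀) (Set.mem_Ioi.2 hs₀)
          (by nlinarith)
        simp only [] at h2
        rw [div_le_div_iff₀ hs₀ hνs₀] at h2
        nlinarith
      have hωχpos : 0 < ω ((1 - ‖χ t‖) ^ (1 - α)) :=
        lt_of_lt_of_le (mul_pos hνpos hωpos) (le_trans hω2 hω1)
      -- derivative bound
      have hb := hbound (χ t) (hχmem t ⟨ht0.le, ht1.le⟩)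
      have hDb : ‖g' t‖ ≤ (C₅ / ω ((1 - ‖χ t‖) ^ (1 - α))) * ‖z₁ - z₂‖ := by
        have h3 := clm_bound (fderiv ℝ f (χ t)) (z₁ - z₂)
        rw [show (fderiv ℝ f (χ t) 1 - I * fderiv ℝ f (χ t) I) / 2 = wdz f (χ t) from rfl,
          show (fderiv ℝ f (χ t) 1 + I * fderiv ℝ f (χ t) I) / 2 = wdzbar f (χ t) from rfl] at h3
        exact le_trans h3 (mul_le_mul_of_nonneg_right hb (norm_nonneg _))
      have hDb2 : ‖g' t‖ ≤ (C₅ / (ν * ω s₀)) * ‖z₁ - z₂‖ := by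
        refine le_trans hDb (mul_le_mul_of_nonneg_right ?_ (norm_nonneg _))
        exact div_le_div_of_nonneg_left hC₅.le (mul_pos hνpos hωpos) (le_trans hω2 hω1)
      -- rewrite the bound as M t
      have hMeq : (C₅ / (ν * ω s₀)) * ‖z₁ - z₂‖ = M t := by
        have hν' : ν = t ^ ((1 - α) / 2) * (1 - t) ^ ((1 - α) / 2) :=
          Real.mul_rpow ht0.le (by linarith)
        have htc : t ^ (c - 1) = (t ^ ((1 - α) / 2))⁻¹ := by
          rw [show c - 1 = -((1 - α) / 2) by rw [hcdef]; ring, Real.rpow_neg ht0.le]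
        have htc' : (1 - t) ^ (c - 1) = ((1 - t) ^ ((1 - α) / 2))⁻¹ := by
          rw [show c - 1 = -((1 - α) / 2) by rw [hcdef]; ring,
            Real.rpow_neg (by linarith : (0:ℝ) ≤ 1 - t)]
        have hp1 : (0:ℝ) < t ^ ((1 - α) / 2) := Real.rpow_pos_of_pos ht0 _
        have hp2 : (0:ℝ) < (1 - t) ^ ((1 - α) / 2) := Real.rpow_pos_of_pos (by linarith) _
        rw [hMdef]
        simp only []
        rw [htc, htc', hν']
        field_simp
        try exact Or.inl trivial
      exact hMeq ▸ hDb2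
    -- combine
    have hbig : ‖f z₁ - f z₂‖ ≤ |∫ t in (0:ℝ)..1, M t| := by
      rw [← hFTC]
      exact le_trans (intervalIntegral.norm_integral_le_of_norm_le zero_le_one
        ((MeasureTheory.ae_restrict_iff' measurableSet_Ioc).1
          (by rwa [Set.uIoc_of_le zero_le_one] at hae)) hMint) (le_abs_self _)
    have hint : ∫ t in (0:ℝ)..1, M t
        = C₅ / ω s₀ * (Real.Gamma c ^ 2 / Real.Gamma (2 * c)) * ‖z₁ - z₂‖ := by
      rw [hMdef]
      simp only []
      rw [intervalIntegral.integral_mul_const, intervalIntegral.integral_const_mul,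
        real_beta_value hc]
    have h2c : 2 * c = 1 + α := by rw [hcdef]; ring
    rw [hint, h2c] at hbig
    have habs : |C₅ / ω s₀ * (Real.Gamma c ^ 2 / Real.Gamma (1 + α)) * ‖z₁ - z₂‖|
        = C₅ / ω s₀ * (Real.Gamma c ^ 2 / Real.Gamma (1 + α)) * ‖z₁ - z₂‖ := by
      apply _root_.abs_of_nonneg
      have hg1 : 0 < Real.Gamma c := Real.Gamma_pos_of_pos hc
      have hg2 : 0 < Real.Gamma (1 + α) := Real.Gamma_pos_of_pos (by linarith)
      positivity
    rw [habs] at hbig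
    calc ‖f z₁ - f z₂‖ ≤ C₅ / ω s₀ * (Real.Gamma c ^ 2 / Real.Gamma (1 + α)) * ‖z₁ - z₂‖ :=
        hbig
      _ = Real.Gamma c ^ 2 / Real.Gamma (1 + α) * C₅ * ‖z₁ - z₂‖ / ω s₀ := by
        field_simp
end

section
/- Let ω be a majorant, α ∈ [0,1], C₅ > 0, and let f ∈ C¹(𝔻) be univalent with convex image f(𝔻). Suppose l(D_f(z)) ≥ ω((1+|z|)^{1−α})/C₅ for all z ∈ 𝔻. Then for all z₁, z₂ ∈ 𝔻, |f(z₁) − f(z₂)| ≥ (1/(2^{1−α} C₅)) ω(((1+|z₁|)(1+|z₂|))^{(1−α)/2}) |z₁ − z₂|. -/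
open Complex Metric Set

lemma clm_decomp (L : ℂ →L[ℝ] ℂ) (v : ℂ) :
    L v = ((L 1 - Complex.I * L Complex.I) / 2) * v
        + ((L 1 + Complex.I * L Complex.I) / 2) * (starRingEnd ℂ v) := by
  have hv : v = v.re • (1:ℂ) + v.im • Complex.I := by
    simp [Complex.real_smul, Complex.ext_iff]
  nth_rewrite 1 [hv]
  rw [map_add, map_smul, map_smul]
  have hconj : (starRingEnd ℂ) v = (v.re : ℂ) - v.im * Complex.I := by
    simp [Complex.ext_iff]
  rw [hconj]
  nth_rewrite 3 [hv]
  simp only [Complex.real_smul]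
  ring_nf
  simp [Complex.I_sq]

lemma clm_stretch (L : ℂ →L[ℝ] ℂ) (v : ℂ) :
    |‖(L 1 - Complex.I * L Complex.I) / 2‖
      - ‖(L 1 + Complex.I * L Complex.I) / 2‖| * ‖v‖
      ≤ ‖L v‖ := by
  set a := (L 1 - Complex.I * L Complex.I) / 2
  set b := (L 1 + Complex.I * L Complex.I) / 2
  rw [clm_decomp L v]
  have hb : ‖b * starRingEnd ℂ v‖ = ‖b‖ * ‖v‖ := by
    rw [norm_mul, Complex.norm_conj]
  have h1 : ‖a * v‖ ≤ ‖a * v + b * starRingEnd ℂ v‖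
      + ‖b * starRingEnd ℂ v‖ := by
    calc ‖a * v‖ = ‖(a * v + b * starRingEnd ℂ v) - b * starRingEnd ℂ v‖ := by
          ring_nf
      _ ≤ _ := norm_sub_le _ _
  have h2 : ‖b * starRingEnd ℂ v‖ ≤ ‖a * v + b * starRingEnd ℂ v‖
      + ‖a * v‖ := by
    calc ‖b * starRingEnd ℂ v‖
        = ‖(a * v + b * starRingEnd ℂ v) - a * v‖ := by ring_nf
      _ ≤ _ := norm_sub_le _ _
  rw [norm_mul, Complex.norm_conj] at h2
  rw [norm_mul] at h1 h2
  show |‖a‖ - ‖b‖| * ‖v‖ ≤ ‖a * v + b * starRingEnd ℂ v‖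
  rcases abs_cases (‖a‖ - ‖b‖) with ⟨h, _⟩ | ⟨h, _⟩ <;> rw [h] <;> nlinarith

lemma exists_clequiv (L : ℂ →L[ℝ] ℂ) {c : ℝ} (hc : 0 < c)
    (h : ∀ v, c * ‖v‖ ≤ ‖L v‖) :
    ∃ E : ℂ ≃L[ℝ] ℂ, (E : ℂ →L[ℝ] ℂ) = L := by
  have hinj : Function.Injective L := by
    intro u v huv
    have h2 := h (u - v)
    have hL0 : L (u - v) = 0 := by rw [map_sub, huv, sub_self]
    rw [hL0, norm_zero] at h2
    have habs : ‖u - v‖ = 0 := by nlinarith [norm_nonneg (u - v)]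
    exact sub_eq_zero.mp (norm_eq_zero.mp habs)
  have hinj' : Function.Injective (L : ℂ →ₗ[ℝ] ℂ) := hinj
  have hsurj : Function.Surjective (L : ℂ →ₗ[ℝ] ℂ) :=
    (LinearMap.injective_iff_surjective).mp hinj'
  refine ⟨(LinearEquiv.ofBijective (L : ℂ →ₗ[ℝ] ℂ) ⟨hinj', hsurj⟩).toContinuousLinearEquiv, ?_⟩
  ext v
  rfl


/-- Lower Lipschitz-type bound: if f is univalent on 𝔻 with convex image and
    l(D_f(z)) ≥ ω((1+|z|)^{1−α})/C₅ for a majorant ω, then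
    |f(z₁) − f(z₂)| ≥ ω(((1+|z₁|)(1+|z₂|))^{(1−α)/2}) |z₁−z₂| / (2^{1−α} C₅). -/
theorem lower_modulus_bound (ω : ℝ → ℝ)
    (hcont : ContinuousOn ω (Set.Ici 0))
    (hmono : MonotoneOn ω (Set.Ici 0))
    (h0 : ω 0 = 0)
    (hdec : AntitoneOn (fun t => ω t / t) (Set.Ioi 0))
    (α : ℝ) (hα : α ∈ Set.Icc (0:ℝ) 1) (C₅ : ℝ) (hC₅ : 0 < C₅)
    (f : ℂ → ℂ) (hreg : ContDiffOn ℝ 1 f (Metric.ball 0 1))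
    (hinj : Set.InjOn f (Metric.ball 0 1))
    (hconv : Convex ℝ (f '' Metric.ball 0 1))
    (hbound : ∀ z ∈ Metric.ball (0:ℂ) 1,
      ω ((1 + ‖z‖) ^ (1 - α)) / C₅
        ≤ |‖wdz f z‖ - ‖wdzbar f z‖|) :
    ∀ z₁ ∈ Metric.ball (0:ℂ) 1, ∀ z₂ ∈ Metric.ball (0:ℂ) 1,
      (1 / ((2:ℝ) ^ (1 - α) * C₅))
          * ω (((1 + ‖z₁‖) * (1 + ‖z₂‖)) ^ ((1 - α) / 2))
          * ‖z₁ - z₂‖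
        ≤ ‖f z₁ - f z₂‖ := by
  intro z₁ hz₁ z₂ hz₂
  obtain ⟨hα0, hα1⟩ := hα
  have hexp : (0:ℝ) ≤ 1 - α := by linarith
  set A : ℝ := (2:ℝ) ^ (1 - α) with hA_def
  have hA1 : (1:ℝ) ≤ A := Real.one_le_rpow one_le_two hexp
  have hA0 : (0:ℝ) < A := lt_of_lt_of_le one_pos hA1
  set s0 : ℝ := ((1 + ‖z₁‖) * (1 + ‖z₂‖)) ^ ((1 - α) / 2) with hs0_def
  -- basic facts about s0
  have hz₁' : ‖z₁‖ < 1 := by simpa using mem_ball_zero_iff.mp hz₁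
  have hz₂' : ‖z₂‖ < 1 := by simpa using mem_ball_zero_iff.mp hz₂
  have hprod_pos : (0:ℝ) < (1 + ‖z₁‖) * (1 + ‖z₂‖) := by
    have := norm_nonneg z₁; have := norm_nonneg z₂; nlinarith
  have hprod_le : (1 + ‖z₁‖) * (1 + ‖z₂‖) ≤ 4 := by
    have := norm_nonneg z₁; have := norm_nonneg z₂; nlinarith
  have hs0_pos : (0:ℝ) < s0 := Real.rpow_pos_of_pos hprod_pos _
  have hs0_le : s0 ≤ A := by
    have h4 : ((4:ℝ)) ^ ((1 - α) / 2) = A := by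
      rw [hA_def, show (4:ℝ) = 2 ^ (2:ℝ) by norm_num [Real.rpow_natCast]]
      rw [← Real.rpow_mul (by norm_num)]
      congr 1
      ring
    calc s0 ≤ (4:ℝ) ^ ((1 - α) / 2) :=
          Real.rpow_le_rpow (le_of_lt hprod_pos) hprod_le (by linarith)
      _ = A := h4
  have hω_nonneg : ∀ t : ℝ, 0 ≤ t → 0 ≤ ω t := fun t ht => by
    have := hmono (self_mem_Ici) ht ht; rw [h0] at this; exact this
  rcases eq_or_lt_of_le (hω_nonneg s0 hs0_pos.le) with hωz | hωpos
  · rw [← hωz]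
    have : (1 / (A * C₅)) * 0 * ‖z₁ - z₂‖ = 0 := by ring
    rw [this]
    exact norm_nonneg _
  -- the uniform constant
  set c : ℝ := ω s0 / (A * C₅) with hc_def
  have hc : 0 < c := div_pos hωpos (mul_pos hA0 hC₅)
  -- pointwise lower bound on the differential
  have key : ∀ z ∈ Metric.ball (0:ℂ) 1, ∀ v : ℂ,
      c * ‖v‖ ≤ ‖fderiv ℝ f z v‖ := by
    intro z hz v
    set t : ℝ := (1 + ‖z‖) ^ (1 - α) with ht_def
    have ht1 : (1:ℝ) ≤ t := Real.one_le_rpow (by linarith [norm_nonneg z]) hexp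
    have hsA_pos : (0:ℝ) < s0 / A := div_pos hs0_pos hA0
    have h1 : ω s0 / A ≤ ω (s0 / A) := by
      have h4 := hdec (mem_Ioi.mpr hsA_pos) (mem_Ioi.mpr hs0_pos)
        (div_le_self hs0_pos.le hA1)
      have h5 := mul_le_mul_of_nonneg_right h4 hsA_pos.le
      have e1 : ω s0 / s0 * (s0 / A) = ω s0 / A := by
        field_simp
      have e2 : ω (s0 / A) / (s0 / A) * (s0 / A) = ω (s0 / A) :=
        div_mul_cancel₀ _ (ne_of_gt hsA_pos)
      rw [e2] at h5
      rw [← e1]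
      exact h5
    have h2 : ω (s0 / A) ≤ ω t :=
      hmono (mem_Ici.mpr hsA_pos.le) (mem_Ici.mpr (by linarith))
        (le_trans ((div_le_one hA0).mpr hs0_le) ht1)
    have h3 : c ≤ ω t / C₅ := by
      rw [hc_def, ← div_div]
      gcongr
      exact h1.trans h2
    have h4 : c ≤ |‖wdz f z‖ - ‖wdzbar f z‖| :=
      le_trans h3 (hbound z hz)
    have h5 := clm_stretch (fderiv ℝ f z) v
    have hwd : wdz f z = (fderiv ℝ f z 1 - Complex.I * fderiv ℝ f z Complex.I) / 2 := rfl
    have hwdb : wdzbar f z = (fderiv ℝ f z 1 + Complex.I * fderiv ℝ f z Complex.I) / 2 := rfl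
    rw [← hwd, ← hwdb] at h5
    calc c * ‖v‖
        ≤ |‖wdz f z‖ - ‖wdzbar f z‖| * ‖v‖ := by
          have := norm_nonneg v; nlinarith
      _ ≤ ‖fderiv ℝ f z v‖ := h5
  -- strict derivatives and invertibility
  have hstrictAll : ∀ z ∈ Metric.ball (0:ℂ) 1,
      ∃ E : ℂ ≃L[ℝ] ℂ, HasStrictFDerivAt f (E : ℂ →L[ℝ] ℂ) z := by
    intro z hz
    obtain ⟨E, hE⟩ := exists_clequiv (fderiv ℝ f z) hc (key z hz)
    refine ⟨E, ?_⟩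
    rw [hE]
    exact (hreg.contDiffAt (isOpen_ball.mem_nhds hz)).hasStrictFDerivAt one_ne_zero
  -- the image is open
  have hs_open : IsOpen (f '' Metric.ball (0:ℂ) 1) := by
    rw [isOpen_iff_mem_nhds]
    rintro w ⟨z, hz, rfl⟩
    obtain ⟨E, hstrict⟩ := hstrictAll z hz
    rw [← hstrict.map_nhds_eq_of_equiv]
    exact Filter.mem_map.mpr (Filter.mem_of_superset (isOpen_ball.mem_nhds hz)
      (Set.subset_preimage_image f _))
  -- the global inverse
  set g : ℂ → ℂ := Function.invFunOn f (Metric.ball 0 1) with hg_def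
  have key2 : ∀ w ∈ f '' Metric.ball (0:ℂ) 1,
      DifferentiableAt ℝ g w ∧ ‖fderiv ℝ g w‖ ≤ 1 / c := by
    rintro w ⟨z, hz, rfl⟩
    obtain ⟨E, hstrict⟩ := hstrictAll z hz
    have hloc := hstrict.to_localInverse
    have heq : g =ᶠ[nhds (f z)] hstrict.localInverse f E z := by
      have h1 := hstrict.eventually_right_inverse
      have h2 : ∀ᶠ y in nhds (f z),
          hstrict.localInverse f E z y ∈ Metric.ball (0:ℂ) 1 := by
        have hca := hstrict.localInverse_continuousAt
        have hmem : Metric.ball (0:ℂ) 1 ∈ nhds (hstrict.localInverse f E z (f z)) := by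
          rw [hstrict.localInverse_apply_image]
          exact isOpen_ball.mem_nhds hz
        exact hca.eventually_mem hmem
      have h3 : ∀ᶠ y in nhds (f z), y ∈ f '' Metric.ball (0:ℂ) 1 :=
        hs_open.eventually_mem (mem_image_of_mem f hz)
      filter_upwards [h1, h2, h3] with y hy1 hy2 hy3
      obtain ⟨u, hu, rfl⟩ := hy3
      have hgfu : f (g (f u)) = f u := Function.invFunOn_apply_eq (f := f) hu
      have hgmem : g (f u) ∈ Metric.ball (0:ℂ) 1 := Function.invFunOn_apply_mem (f := f) hu
      exact hinj hgmem hy2 (hgfu.trans hy1.symm)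
    have hginv : HasFDerivAt g ((E.symm : ℂ →L[ℝ] ℂ)) (f z) :=
      hloc.hasFDerivAt.congr_of_eventuallyEq heq
    refine ⟨hginv.differentiableAt, ?_⟩
    rw [hginv.fderiv]
    refine ContinuousLinearMap.opNorm_le_bound _ (by positivity) fun u => ?_
    have hk := key z hz (E.symm u)
    have happ : (E : ℂ →L[ℝ] ℂ) (E.symm u) = u := E.apply_symm_apply u
    have hEf : (E : ℂ →L[ℝ] ℂ) = fderiv ℝ f z := by
      have := hstrict.hasFDerivAt.fderiv
      rw [← this]
    rw [hEf] at happ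
    rw [happ] at hk
    have : ‖E.symm u‖ ≤ 1 / c * ‖u‖ := by
      rw [div_mul_eq_mul_div, le_div_iff₀ hc]
      linarith
    simpa using this
  -- conclude with the mean value inequality for the inverse
  have hlip := hconv.norm_image_sub_le_of_norm_fderiv_le
    (fun x hx => (key2 x hx).1) (fun x hx => (key2 x hx).2)
    (mem_image_of_mem f hz₁) (mem_image_of_mem f hz₂)
  have hg1 : g (f z₁) = z₁ :=
    hinj (Function.invFunOn_apply_mem (f := f) hz₁) hz₁ (Function.invFunOn_apply_eq (f := f) hz₁)
  have hg2 : g (f z₂) = z₂ :=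
    hinj (Function.invFunOn_apply_mem (f := f) hz₂) hz₂ (Function.invFunOn_apply_eq (f := f) hz₂)
  rw [hg1, hg2] at hlip
  have hfinal : c * ‖z₁ - z₂‖ ≤ ‖f z₁ - f z₂‖ := by
    rw [div_mul_eq_mul_div, le_div_iff₀ hc] at hlip
    have e1 : ‖z₂ - z₁‖ = ‖z₁ - z₂‖ := norm_sub_rev _ _
    have e2 : ‖f z₂ - f z₁‖ = ‖f z₁ - f z₂‖ := norm_sub_rev _ _
    rw [e1, e2, one_mul] at hlip
    linarith
  calc (1 / (A * C₅)) * ω s0 * ‖z₁ - z₂‖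
      = c * ‖z₁ - z₂‖ := by rw [hc_def]; ring
    _ ≤ ‖f z₁ - f z₂‖ := hfinal
end
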